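/- arXiv:2211.03708 — 3 statements merged into one kernel-verified Lean document; each statement's English description precedes it below -/
import Mathlib

section
/- Let Δ ⊆ k̄² be any subset, and let Δ̂ denote the zero locus in k̄² of the ideal I_k(Δ) ⊆ k[x,y] of all polynomials with coefficients in k vanishing at every point of Δ. Then every irreducible component of Δ̂ (for the Zariski topology on k̄²) is the image, under the coordinatewise action of some g ∈ Gal(k̄/k), of an irreducible component of the Zariski closure of Δ in k̄². -/
open MvPolynomial

noncomputable section

/-- Points of the affine plane over the algebraic closure of `k`. -/
abbrev Pt (k : Type*) [Field k] : Type _ := Fin 2 → AlgebraicClosure k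

/-- Plane automorphisms over `k`, modeled as `k`-algebra automorphisms of `k[x,y]`. -/
abbrev PlaneAut (k : Type*) [Field k] : Type _ :=
  MvPolynomial (Fin 2) k ≃ₐ[k] MvPolynomial (Fin 2) k

/-- The embedding of `k` in its algebraic closure. -/
abbrev emb (k : Type*) [Field k] : k →+* AlgebraicClosure k :=
  algebraMap k (AlgebraicClosure k)

variable {k : Type*} [Field k]

/-- The action of a plane automorphism on the points of the plane over `k̄`:
the point map of `φ` is `q ↦ (f(q), g(q))` where `f = φ.symm X₀`, `g = φ.symm X₁`
(so that `actp` is a left action of the automorphism group on points). -/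
def actp (φ : PlaneAut k) (q : Pt k) : Pt k :=
  fun i => aeval q (φ.symm (X i))

/-- The Zariski closure of a set of points of `k̄²`: the zero locus of the ideal of all
polynomials with coefficients in `k̄` vanishing on it. -/
def zclos (Δ : Set (Pt k)) : Set (Pt k) :=
  zeroLocus (AlgebraicClosure k) (vanishingIdeal (k := AlgebraicClosure k) Δ)

/-- `Δ̂` : the zero locus in `k̄²` of the ideal `I_k(Δ)` of all polynomials with
coefficients in `k` vanishing on `Δ`. -/
def hatSet (Δ : Set (Pt k)) : Set (Pt k) :=
  {q | ∀ P : MvPolynomial (Fin 2) k, (∀ x ∈ Δ, aeval x P = 0) → aeval q P = 0}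

/-- Coordinatewise action of the Galois group `Gal(k̄/k)` on points of `k̄²`. -/
def galAct (g : AlgebraicClosure k ≃ₐ[k] AlgebraicClosure k) (q : Pt k) : Pt k :=
  fun i => g (q i)

/-- A subset of `k̄²` is Zariski closed iff it is the zero locus of an ideal of `k̄[x,y]`. -/
def IsZClosed (S : Set (Pt k)) : Prop :=
  ∃ I : Ideal (MvPolynomial (Fin 2) (AlgebraicClosure k)), S = zeroLocus (AlgebraicClosure k) I

/-- Irreducibility with respect to the Zariski topology on `k̄²`. -/
def IsZIrreducible (S : Set (Pt k)) : Prop :=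
  S.Nonempty ∧ ∀ Z₁ Z₂ : Set (Pt k), IsZClosed Z₁ → IsZClosed Z₂ → S ⊆ Z₁ ∪ Z₂ →
    (S ⊆ Z₁ ∨ S ⊆ Z₂)

/-- `C` is an irreducible component of `S` (for the Zariski topology on `k̄²`):
a maximal irreducible subset of `S`. -/
def IsIrredComponentOf (C S : Set (Pt k)) : Prop :=
  IsZIrreducible C ∧ C ⊆ S ∧ ∀ C' : Set (Pt k), IsZIrreducible C' → C' ⊆ S → C ⊆ C' → C = C'

/-- The stabilizer `Aut(𝔸², Δ)` of a set of points of `k̄²`, as a set of plane automorphisms. -/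
def stabSet (Δ : Set (Pt k)) : Set (PlaneAut k) :=
  {φ | actp φ '' Δ = Δ}

/-- The orbit `O_H(p)` of a point under a subgroup of plane automorphisms. -/
def orbSub (H : Subgroup (PlaneAut k)) (p : Pt k) : Set (Pt k) :=
  {q | ∃ h ∈ H, actp h p = q}

/-- The orbit `O_φ(p) = {φⁿ(p) : n ∈ ℤ}` of a point under a single plane automorphism. -/
def orbAut (φ : PlaneAut k) (p : Pt k) : Set (Pt k) :=
  {q | ∃ n : ℤ, actp (φ ^ n) p = q}

/-- The degree of a plane automorphism: the maximum of the total degrees of the two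
polynomials giving its point map. -/
def autDegree (φ : PlaneAut k) : ℕ :=
  max (φ.symm (X 0)).totalDegree (φ.symm (X 1)).totalDegree

/-- The torus `T = {(x,y) ↦ (t·x, t⁻¹·y) : t ∈ k*}`, as a set of plane automorphisms. -/
def torusT (k : Type*) [Field k] : Set (PlaneAut k) :=
  {φ | ∃ t : k, t ≠ 0 ∧ ∀ q : Pt k, actp φ q = ![emb k t * q 0, (emb k t)⁻¹ * q 1]}

end

section Stmt1Aux

open MvPolynomial

variable {k : Type*} [Field k]

local notation "Kb" => AlgebraicClosure k
local notation "Gal" => (AlgebraicClosure k ≃ₐ[k] AlgebraicClosure k)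
local notation "MvP" => MvPolynomial (Fin 2) (AlgebraicClosure k)

lemma galAct_symm_left (g : Gal) (q : Pt k) : galAct g.symm (galAct g q) = q :=
  funext fun i => g.symm_apply_apply _

lemma galAct_symm_right (g : Gal) (q : Pt k) : galAct g (galAct g.symm q) = q :=
  funext fun i => g.apply_symm_apply _

lemma mem_galAct_image {g : Gal} {S : Set (Pt k)} {q : Pt k} :
    q ∈ galAct g '' S ↔ galAct g.symm q ∈ S := by
  constructor
  · rintro ⟨p, hp, rfl⟩; rwa [galAct_symm_left]
  · intro h; exact ⟨galAct g.symm q, h, galAct_symm_right g q⟩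

lemma eval_mapg (g : Gal) (P : MvP) (q : Pt k) :
    MvPolynomial.eval (galAct g q) (MvPolynomial.map (↑g : Kb →+* Kb) P)
      = g (MvPolynomial.eval q P) := by
  rw [MvPolynomial.eval_map]
  have h := MvPolynomial.eval₂_comp_left (↑g : Kb →+* Kb) (RingHom.id Kb) q P
  rw [RingHom.comp_id] at h
  exact h.symm

lemma eval_mapg' (g : Gal) (P : MvP) (q : Pt k) :
    MvPolynomial.eval q (MvPolynomial.map (↑g : Kb →+* Kb) P)
      = g (MvPolynomial.eval (galAct g.symm q) P) := by
  conv_lhs => rw [← galAct_symm_right g q]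
  exact eval_mapg g P (galAct g.symm q)

lemma aeval_eq_eval_map (b : MvPolynomial (Fin 2) k) (q : Pt k) :
    MvPolynomial.aeval q b = MvPolynomial.eval q (MvPolynomial.map (algebraMap k Kb) b) := by
  rw [MvPolynomial.eval_map, MvPolynomial.aeval_def]

lemma mapg_map_algebraMap (g : Gal) (b : MvPolynomial (Fin 2) k) :
    MvPolynomial.map (↑g : Kb →+* Kb) (MvPolynomial.map (algebraMap k Kb) b)
      = MvPolynomial.map (algebraMap k Kb) b := by
  rw [MvPolynomial.map_map]
  have hcomp : (↑g : Kb →+* Kb).comp (algebraMap k Kb) = algebraMap k Kb :=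
    RingHom.ext fun x => g.commutes x
  rw [hcomp]

lemma mapg_mapg_symm (g : Gal) (Q : MvP) :
    MvPolynomial.map (↑g : Kb →+* Kb) (MvPolynomial.map (↑g.symm : Kb →+* Kb) Q) = Q := by
  rw [MvPolynomial.map_map]
  have : (↑g : Kb →+* Kb).comp (↑g.symm : Kb →+* Kb) = RingHom.id Kb :=
    RingHom.ext fun x => g.apply_symm_apply x
  rw [this, MvPolynomial.map_id]

/-- Any element of the algebraic closure fixed by the whole Galois group lies in `k`. -/
lemma fixed_mem_range [PerfectField k] (x : Kb) (hx : ∀ g : Gal, g x = x) :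
    ∃ c : k, algebraMap k Kb c = x := by
  classical
  have hint : IsIntegral k x := Algebra.IsIntegral.isIntegral x
  have hsep : (minpoly k x).Separable := Algebra.IsSeparable.isSeparable k x
  set p := minpoly k x with hp
  set q : Polynomial Kb := p.map (algebraMap k Kb) with hq
  have hq0 : q ≠ 0 := Polynomial.map_ne_zero (minpoly.ne_zero hint)
  have hsplit : Polynomial.Splits q := by
    exact IsAlgClosed.splits q
  have hroots_card : Multiset.card q.roots = q.natDegree :=
    (Polynomial.splits_iff_card_roots).mp hsplit
  have hnodup : q.roots.Nodup := Polynomial.nodup_roots (hsep.map)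
  have hall : ∀ y ∈ q.roots, y = x := by
    intro y hy
    have hy0 : Polynomial.aeval y p = 0 := by
      have := Polynomial.isRoot_of_mem_roots hy
      rwa [Polynomial.IsRoot, hq, Polynomial.eval_map, ← Polynomial.aeval_def] at this
    obtain ⟨σ, hσ⟩ := minpoly.exists_algEquiv_of_root (Algebra.IsAlgebraic.isAlgebraic x) hy0
    exact σ.injective (hσ.trans (hx σ).symm)
  have hxmem : x ∈ q.roots := by
    rw [Polynomial.mem_roots hq0, Polynomial.IsRoot, hq, Polynomial.eval_map,
      ← Polynomial.aeval_def]
    exact minpoly.aeval k x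
  have hcard1 : Multiset.card q.roots = 1 := by
    have hle : q.roots.toFinset ⊆ {x} := fun y hy =>
      Finset.mem_singleton.mpr (hall y (Multiset.mem_toFinset.mp hy))
    have := Finset.card_le_card hle
    rw [Multiset.toFinset_card_of_nodup hnodup, Finset.card_singleton] at this
    have hge : 1 ≤ Multiset.card q.roots := Multiset.card_pos_iff_exists_mem.mpr ⟨x, hxmem⟩
    omega
  have hdeg : p.natDegree = 1 := by
    have := hroots_card
    rw [hcard1] at this
    rw [← Polynomial.natDegree_map (algebraMap k Kb)]
    exact this.symm
  obtain ⟨c, hc⟩ := minpoly.natDegree_eq_one_iff.mp hdeg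
  exact ⟨c, hc⟩

lemma exists_preimage_of_coeffs (c : MvP)
    (h : ∀ m : Fin 2 →₀ ℕ, ∃ a : k, algebraMap k Kb a = MvPolynomial.coeff m c) :
    ∃ b : MvPolynomial (Fin 2) k, MvPolynomial.map (algebraMap k Kb) b = c := by
  choose f hf using h
  refine ⟨∑ m ∈ c.support, MvPolynomial.monomial m (f m), ?_⟩
  rw [map_sum]
  simp_rw [MvPolynomial.map_monomial, hf]
  exact MvPolynomial.support_sum_monomial_coeff c

lemma finite_orbit_elem (x : Kb) : {y : Kb | ∃ g : Gal, y = g x}.Finite := by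
  apply Set.Finite.subset ((minpoly k x).rootSet_finite Kb)
  rintro y ⟨g, rfl⟩
  rw [Polynomial.mem_rootSet]
  refine ⟨minpoly.ne_zero (Algebra.IsIntegral.isIntegral x), ?_⟩
  exact (minpoly.algEquiv_eq g x) ▸ minpoly.aeval k (g x)

lemma finite_orbit_poly (P : MvP) :
    {Q : MvP | ∃ g : Gal, Q = MvPolynomial.map (↑g : Kb →+* Kb) P}.Finite := by
  have hsub : {Q : MvP | ∃ g : Gal, Q = MvPolynomial.map (↑g : Kb →+* Kb) P} ⊆
      {Q : MvP | Q.support ⊆ P.support ∧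
        ∀ m : P.support, MvPolynomial.coeff (↑m) Q ∈
          {y : Kb | ∃ g : Gal, y = g (MvPolynomial.coeff (↑m) P)}} := by
    rintro Q ⟨g, rfl⟩
    refine ⟨MvPolynomial.support_map_subset _ _, fun m => ⟨g, ?_⟩⟩
    rw [MvPolynomial.coeff_map]
    rfl
  apply Set.Finite.subset ?_ hsub
  apply Set.Finite.of_finite_image (f := fun Q (m : P.support) => MvPolynomial.coeff (↑m) Q)
  · apply Set.Finite.subset
      (Set.Finite.pi fun m : P.support => finite_orbit_elem (MvPolynomial.coeff (↑m) P))
    rintro _ ⟨Q, hQ, rfl⟩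
    intro m _
    exact hQ.2 m
  · intro Q1 h1 Q2 h2 heq
    apply MvPolynomial.ext
    intro m
    by_cases hm : m ∈ P.support
    · exact congrFun heq ⟨m, hm⟩
    · rw [MvPolynomial.notMem_support_iff.mp (fun h => hm (h1.1 h)),
        MvPolynomial.notMem_support_iff.mp (fun h => hm (h2.1 h))]

lemma isZClosed_empty : IsZClosed (∅ : Set (Pt k)) :=
  ⟨⊤, by rw [MvPolynomial.zeroLocus_top]; rfl⟩

lemma isZClosed_union {A B : Set (Pt k)} (hA : IsZClosed A) (hB : IsZClosed B) :
    IsZClosed (A ∪ B) := by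
  obtain ⟨I, rfl⟩ := hA
  obtain ⟨J, rfl⟩ := hB
  refine ⟨I ⊓ J, Set.Subset.antisymm ?_ ?_⟩
  · rintro q (hq | hq) f hf
    · exact hq f hf.1
    · exact hq f hf.2
  · intro q hq
    by_cases hI : q ∈ zeroLocus Kb I
    · exact Or.inl hI
    · right
      obtain ⟨f, hfI, hf0⟩ : ∃ f ∈ I, MvPolynomial.eval q f ≠ 0 := by
        by_contra h
        push_neg at h
        exact hI h
      intro h hh
      have : f * h ∈ I ⊓ J := ⟨Ideal.mul_mem_right _ _ hfI, Ideal.mul_mem_left _ _ hh⟩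
      have := hq _ this
      rw [map_mul] at this
      rcases mul_eq_zero.mp this with h' | h'
      · exact absurd h' hf0
      · exact h'

lemma isZClosed_sUnion {𝒮 : Set (Set (Pt k))} (hfin : 𝒮.Finite) :
    (∀ S ∈ 𝒮, IsZClosed S) → IsZClosed (⋃₀ 𝒮) := by
  refine Set.Finite.induction_on _ hfin ?_ ?_
  · intro _
    rw [Set.sUnion_empty]
    exact isZClosed_empty
  · intro a s _ _ ih hcl
    rw [Set.sUnion_insert]
    exact isZClosed_union (hcl a (Set.mem_insert a s))
      (ih fun S hS => hcl S (Set.mem_insert_of_mem a hS))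

lemma image_zeroLocus_span (g : Gal) (S : Set MvP) :
    galAct g '' zeroLocus Kb (Ideal.span S)
      = zeroLocus Kb (Ideal.span ((MvPolynomial.map (↑g : Kb →+* Kb)) '' S)) := by
  ext q
  rw [mem_galAct_image, MvPolynomial.zeroLocus_span, MvPolynomial.zeroLocus_span]
  constructor
  · rintro h _ ⟨f, hf, rfl⟩
    change MvPolynomial.eval q _ = 0
    rw [eval_mapg', (show MvPolynomial.eval (galAct g.symm q) f = 0 from h f hf), map_zero]
  · intro h f hf
    have := h _ ⟨f, hf, rfl⟩
    change MvPolynomial.eval q _ = 0 at this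
    change MvPolynomial.eval (galAct g.symm q) f = 0
    rw [eval_mapg'] at this
    exact g.injective (by rw [this, map_zero])

lemma isZClosed_galAct_image {g : Gal} {Z : Set (Pt k)} (hZ : IsZClosed Z) :
    IsZClosed (galAct g '' Z) := by
  obtain ⟨I, rfl⟩ := hZ
  rw [← Ideal.span_eq I, image_zeroLocus_span]
  exact ⟨_, rfl⟩

lemma isZIrreducible_galAct_image {g : Gal} {S : Set (Pt k)} (hS : IsZIrreducible S) :
    IsZIrreducible (galAct g '' S) := by
  obtain ⟨⟨p, hp⟩, hirr⟩ := hS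
  refine ⟨⟨galAct g p, ⟨p, hp, rfl⟩⟩, ?_⟩
  intro Z₁ Z₂ h₁ h₂ hsub
  have hsub' : S ⊆ (galAct g.symm '' Z₁) ∪ (galAct g.symm '' Z₂) := by
    intro x hx
    rcases hsub ⟨x, hx, rfl⟩ with h | h
    · exact Or.inl ⟨galAct g x, h, galAct_symm_left g x⟩
    · exact Or.inr ⟨galAct g x, h, galAct_symm_left g x⟩
  rcases hirr _ _ (isZClosed_galAct_image h₁) (isZClosed_galAct_image h₂) hsub' with h | h
  · left
    rintro _ ⟨x, hx, rfl⟩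
    obtain ⟨z, hz, hzx⟩ := h hx
    rw [← hzx, galAct_symm_right]
    exact hz
  · right
    rintro _ ⟨x, hx, rfl⟩
    obtain ⟨z, hz, hzx⟩ := h hx
    rw [← hzx, galAct_symm_right]
    exact hz

lemma zclos_isZClosed (Δ : Set (Pt k)) : IsZClosed (zclos Δ) := ⟨_, rfl⟩

lemma key_vanish [PerfectField k] (Δ : Set (Pt k)) (q : Pt k) (hq : q ∈ hatSet Δ)
    (P : MvP)
    (hP : ∀ (g : Gal), ∀ x ∈ Δ, MvPolynomial.eval (galAct g x) P = 0) :
    MvPolynomial.eval q P = 0 := by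
  classical
  have horb := finite_orbit_poly (k := k) P
  set s : Finset MvP := horb.toFinset with hs
  have hmem_s : ∀ Q, Q ∈ s ↔ ∃ g : Gal, Q = MvPolynomial.map (↑g : Kb →+* Kb) P := by
    intro Q
    rw [hs, Set.Finite.mem_toFinset]
    rfl
  have hPs : P ∈ s := by
    rw [hmem_s]
    refine ⟨AlgEquiv.refl, ?_⟩
    have h1 : ((AlgEquiv.refl : Kb ≃ₐ[k] Kb) : Kb →+* Kb) = RingHom.id Kb :=
      RingHom.ext fun x => rfl
    rw [h1, MvPolynomial.map_id]
  have hstab : ∀ (g : Gal), ∀ Q ∈ s, MvPolynomial.map (↑g : Kb →+* Kb) Q ∈ s := by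
    intro g Q hQ
    rw [hmem_s] at hQ ⊢
    obtain ⟨h, rfl⟩ := hQ
    refine ⟨h.trans g, ?_⟩
    have hcomp : (↑g : Kb →+* Kb).comp (↑h : Kb →+* Kb) = ((h.trans g) : Kb →+* Kb) :=
      RingHom.ext fun x => rfl
    rw [MvPolynomial.map_map, hcomp]
  have hvanish : ∀ Q ∈ s, ∀ x ∈ Δ, MvPolynomial.eval x Q = 0 := by
    intro Q hQ x hx
    rw [hmem_s] at hQ
    obtain ⟨g, rfl⟩ := hQ
    rw [eval_mapg', hP g.symm x hx, map_zero]
  set F : Polynomial MvP := ∏ Q ∈ s, (Polynomial.X - Polynomial.C Q) with hF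
  have hFinv : ∀ g : Gal, F.map (MvPolynomial.map (↑g : Kb →+* Kb)) = F := by
    intro g
    rw [hF, Polynomial.map_prod]
    have h1 : ∀ Q ∈ s, (Polynomial.X - Polynomial.C Q).map (MvPolynomial.map (↑g : Kb →+* Kb))
        = Polynomial.X - Polynomial.C (MvPolynomial.map (↑g : Kb →+* Kb) Q) := by
      intro Q _
      rw [Polynomial.map_sub, Polynomial.map_X, Polynomial.map_C]
    rw [Finset.prod_congr rfl h1]
    refine Finset.prod_bij (fun Q _ => MvPolynomial.map (↑g : Kb →+* Kb) Q) ?_ ?_ ?_ ?_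
    · intro a ha
      exact hstab g a ha
    · intro a _ b _ hab
      exact MvPolynomial.map_injective _ g.injective hab
    · intro b hb
      exact ⟨MvPolynomial.map (↑g.symm : Kb →+* Kb) b, hstab g.symm b hb, mapg_mapg_symm g b⟩
    · intro a _
      rfl
  have hcoef : ∀ i : ℕ, ∃ b : MvPolynomial (Fin 2) k,
      MvPolynomial.map (algebraMap k Kb) b = F.coeff i := by
    intro i
    apply exists_preimage_of_coeffs
    intro m
    apply fixed_mem_range
    intro g
    conv_rhs => rw [← hFinv g]
    rw [Polynomial.coeff_map, MvPolynomial.coeff_map]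
    rfl
  have hlow : ∀ i : ℕ, i < s.card → ∀ x ∈ Δ, MvPolynomial.eval x (F.coeff i) = 0 := by
    intro i hi x hx
    have hmap : F.map (MvPolynomial.eval x) = Polynomial.X ^ s.card := by
      rw [hF, Polynomial.map_prod]
      have h1 : ∀ Q ∈ s, (Polynomial.X - Polynomial.C Q).map (MvPolynomial.eval x)
          = Polynomial.X := by
        intro Q hQ
        rw [Polynomial.map_sub, Polynomial.map_X, Polynomial.map_C, hvanish Q hQ x hx,
          Polynomial.C_0, sub_zero]
      rw [Finset.prod_congr rfl h1, Finset.prod_const]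
    have h2 := congrArg (fun p : Polynomial Kb => p.coeff i) hmap
    simp only [Polynomial.coeff_map, Polynomial.coeff_X_pow] at h2
    rw [if_neg (Nat.ne_of_lt hi)] at h2
    exact h2
  have hqlow : ∀ i : ℕ, i < s.card → MvPolynomial.eval q (F.coeff i) = 0 := by
    intro i hi
    obtain ⟨b, hb⟩ := hcoef i
    have hbv : ∀ x ∈ Δ, MvPolynomial.aeval x b = 0 := by
      intro x hx
      rw [aeval_eq_eval_map, hb]
      exact hlow i hi x hx
    have := hq b hbv
    rwa [aeval_eq_eval_map, hb] at this
  set G : Polynomial Kb := F.map (MvPolynomial.eval q) with hG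
  have hGprod : G = ∏ Q ∈ s, (Polynomial.X - Polynomial.C (MvPolynomial.eval q Q)) := by
    rw [hG, hF, Polynomial.map_prod]
    refine Finset.prod_congr rfl fun Q _ => ?_
    rw [Polynomial.map_sub, Polynomial.map_X, Polynomial.map_C]
  have hGmonic : G.Monic := by
    rw [hGprod]
    exact Polynomial.monic_prod_of_monic _ _ fun Q _ => Polynomial.monic_X_sub_C _
  have hGdeg : G.natDegree = s.card := by
    rw [hGprod, Polynomial.natDegree_prod_of_monic _ _ fun Q _ => Polynomial.monic_X_sub_C _]
    simp [Polynomial.natDegree_X_sub_C]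
  have hcard : s.card ≠ 0 := Finset.card_ne_zero_of_mem hPs
  have heval0 : Polynomial.eval (MvPolynomial.eval q P) G = 0 := by
    rw [hGprod, Polynomial.eval_prod]
    apply Finset.prod_eq_zero hPs
    rw [Polynomial.eval_sub, Polynomial.eval_X, Polynomial.eval_C, sub_self]
  have hevalpow : Polynomial.eval (MvPolynomial.eval q P) G
      = (MvPolynomial.eval q P) ^ s.card := by
    rw [Polynomial.eval_eq_sum_range, hGdeg, Finset.sum_range_succ]
    have hz : ∀ i ∈ Finset.range s.card, G.coeff i * (MvPolynomial.eval q P) ^ i = 0 := by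
      intro i hi
      rw [hG, Polynomial.coeff_map, hqlow i (Finset.mem_range.mp hi), zero_mul]
    rw [Finset.sum_eq_zero hz, zero_add, ← hGdeg, hGmonic.coeff_natDegree, one_mul]
  have hfinal := hevalpow.symm.trans heval0
  exact (pow_eq_zero_iff hcard).mp hfinal

lemma galAct_image_zclos_subset_hatSet (Δ : Set (Pt k)) (g : Gal) :
    galAct g '' zclos Δ ⊆ hatSet Δ := by
  rintro _ ⟨p, hp, rfl⟩
  intro b hb
  have hmem : MvPolynomial.map (algebraMap k Kb) b ∈ vanishingIdeal (k := Kb) Δ := by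
    intro x hx
    change MvPolynomial.eval x (MvPolynomial.map (algebraMap k Kb) b) = 0
    rw [← aeval_eq_eval_map]
    exact hb x hx
  have h0 : MvPolynomial.eval p (MvPolynomial.map (algebraMap k Kb) b) = 0 := (mem_zeroLocus_iff.mp hp) _ hmem
  rw [aeval_eq_eval_map, ← mapg_map_algebraMap g b, eval_mapg, h0, map_zero]

lemma finite_range_galAct_zclos (Δ : Set (Pt k)) :
    (Set.range fun g : Gal => galAct g '' zclos Δ).Finite := by
  classical
  obtain ⟨t, ht⟩ : (vanishingIdeal (k := Kb) Δ).FG := IsNoetherian.noetherian _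
  set ts : Set MvP := (t : Set MvP) with hts
  set u : Gal → (ts → MvP) := fun g f => MvPolynomial.map (↑g : Kb →+* Kb) ↑f with hu
  have heq : (fun g : Gal => galAct g '' zclos Δ)
      = (fun v : ts → MvP => zeroLocus Kb (Ideal.span (Set.range fun f => v f))) ∘ u := by
    funext g
    have h1 : zclos Δ = zeroLocus Kb (Ideal.span ts) := by
      rw [zclos, ← ht]
    rw [h1, image_zeroLocus_span]
    simp only [Function.comp, hu]
    rw [Set.image_eq_range]
  rw [heq, Set.range_comp]
  apply Set.Finite.image
  apply Set.Finite.subset (Set.Finite.pi fun f : ts => finite_orbit_poly (k := k) (↑f : MvP))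
  rintro _ ⟨g, rfl⟩ f _
  exact ⟨g, rfl⟩

lemma hatSet_eq_sUnion [PerfectField k] (Δ : Set (Pt k)) :
    hatSet Δ = ⋃₀ (Set.range fun g : Gal => galAct g '' zclos Δ) := by
  apply Set.Subset.antisymm
  · intro q hq
    obtain ⟨K, hK⟩ : IsZClosed (⋃₀ (Set.range fun g : Gal => galAct g '' zclos Δ)) :=
      isZClosed_sUnion (finite_range_galAct_zclos Δ)
        (by rintro _ ⟨g, rfl⟩; exact isZClosed_galAct_image (zclos_isZClosed Δ))
    have hKsub : ∀ P ∈ K, ∀ (g : Gal), ∀ x ∈ Δ, MvPolynomial.eval (galAct g x) P = 0 := by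
      intro P hP g x hx
      have hmem : galAct g x ∈ ⋃₀ (Set.range fun g : Gal => galAct g '' zclos Δ) :=
        Set.mem_sUnion.mpr ⟨_, ⟨g, rfl⟩, ⟨x, zeroLocus_vanishingIdeal_le (k := Kb) Δ hx, rfl⟩⟩
      rw [hK] at hmem
      exact hmem P hP
    rw [hK]
    intro P hP
    exact key_vanish Δ q hq P (hKsub P hP)
  · intro q hq
    obtain ⟨_, ⟨g, rfl⟩, hqg⟩ := hq
    exact galAct_image_zclos_subset_hatSet Δ g hqg

lemma subset_of_irred {C : Set (Pt k)} (hC : IsZIrreducible C) {𝒮 : Set (Set (Pt k))}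
    (hfin : 𝒮.Finite) :
    (∀ S ∈ 𝒮, IsZClosed S) → C ⊆ ⋃₀ 𝒮 → ∃ S ∈ 𝒮, C ⊆ S := by
  refine Set.Finite.induction_on _ hfin ?_ ?_
  · intro _ hsub
    obtain ⟨p, hp⟩ := hC.1
    exact absurd (hsub hp) (by simp)
  · intro a s _ hsfin ih hcl hsub
    rw [Set.sUnion_insert] at hsub
    rcases hC.2 a (⋃₀ s) (hcl a (Set.mem_insert a s))
        (isZClosed_sUnion hsfin fun S hS => hcl S (Set.mem_insert_of_mem a hS)) hsub with h | h
    · exact ⟨a, Set.mem_insert a s, h⟩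
    · obtain ⟨S, hS, hCS⟩ := ih (fun S hS => hcl S (Set.mem_insert_of_mem a hS)) h
      exact ⟨S, Set.mem_insert_of_mem a hS, hCS⟩

lemma exists_component {S D₀ : Set (Pt k)} (h0 : IsZIrreducible D₀) (hsub : D₀ ⊆ S) :
    ∃ D, IsIrredComponentOf D S ∧ D₀ ⊆ D := by
  have hchaincond : ∀ c ⊆ {E : Set (Pt k) | IsZIrreducible E ∧ E ⊆ S},
      IsChain (· ⊆ ·) c → c.Nonempty →
      ∃ ub ∈ {E : Set (Pt k) | IsZIrreducible E ∧ E ⊆ S}, ∀ s ∈ c, s ⊆ ub := by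
    intro c hc hchain hne
    refine ⟨⋃₀ c, ⟨⟨?_, ?_⟩, ?_⟩, fun s hs => Set.subset_sUnion_of_mem hs⟩
    · obtain ⟨E, hE⟩ := hne
      obtain ⟨p, hp⟩ := (hc hE).1.1
      exact ⟨p, E, hE, hp⟩
    · intro Z₁ Z₂ h₁ h₂ hsub'
      by_contra hcon
      push_neg at hcon
      obtain ⟨x, hx, hx1⟩ := Set.not_subset.mp hcon.1
      obtain ⟨y, hy, hy2⟩ := Set.not_subset.mp hcon.2
      obtain ⟨Ex, hEx, hxEx⟩ := hx
      obtain ⟨Ey, hEy, hyEy⟩ := hy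
      rcases hchain.total hEx hEy with hle | hle
      · rcases (hc hEy).1.2 Z₁ Z₂ h₁ h₂
            (fun z hz => hsub' (Set.subset_sUnion_of_mem hEy hz)) with h | h
        · exact hx1 (h (hle hxEx))
        · exact hy2 (h hyEy)
      · rcases (hc hEx).1.2 Z₁ Z₂ h₁ h₂
            (fun z hz => hsub' (Set.subset_sUnion_of_mem hEx hz)) with h | h
        · exact hx1 (h hxEx)
        · exact hy2 (h (hle hyEy))
    · intro z hz
      obtain ⟨E, hE, hzE⟩ := hz
      exact (hc hE).2 hzE
  obtain ⟨D, hD0, hmax⟩ := zorn_subset_nonempty {E : Set (Pt k) | IsZIrreducible E ∧ E ⊆ S}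
    hchaincond D₀ ⟨h0, hsub⟩
  refine ⟨D, ⟨hmax.1.1, hmax.1.2, ?_⟩, hD0⟩
  intro C' hC' hC'S hDC'
  exact Set.Subset.antisymm hDC' (hmax.2 ⟨hC', hC'S⟩ hDC')

end Stmt1Aux


/-- Every irreducible component of `Δ̂` is the image under some
`g ∈ Gal(k̄/k)` of an irreducible component of the Zariski closure of `Δ`. -/
theorem stmt_1 (k : Type*) [Field k] [PerfectField k] (Δ C : Set (Pt k))
    (hC : IsIrredComponentOf C (hatSet Δ)) :
    ∃ (g : AlgebraicClosure k ≃ₐ[k] AlgebraicClosure k) (D : Set (Pt k)),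
      IsIrredComponentOf D (zclos Δ) ∧ C = galAct g '' D := by
  classical
  obtain ⟨hCirr, hCsub, hCmax⟩ := hC
  rw [hatSet_eq_sUnion Δ] at hCsub
  obtain ⟨S, hS, hCS⟩ := subset_of_irred hCirr (finite_range_galAct_zclos Δ)
    (by rintro _ ⟨g, rfl⟩; exact isZClosed_galAct_image (zclos_isZClosed Δ)) hCsub
  obtain ⟨g, rfl⟩ := hS
  have hD0sub : galAct g.symm '' C ⊆ zclos Δ := by
    rintro _ ⟨x, hx, rfl⟩
    obtain ⟨p, hp, hpx⟩ := hCS hx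
    rw [← hpx, galAct_symm_left]
    exact hp
  obtain ⟨D, hDcomp, hD0D⟩ :=
    exists_component (isZIrreducible_galAct_image (g := g.symm) hCirr) hD0sub
  refine ⟨g, D, hDcomp, ?_⟩
  apply hCmax
  · exact isZIrreducible_galAct_image hDcomp.1
  · exact (Set.image_mono hDcomp.2.1).trans (galAct_image_zclos_subset_hatSet Δ g)
  · intro x hx
    exact ⟨galAct g.symm x, hD0D ⟨x, hx, rfl⟩, galAct_symm_right g x⟩
end

section
/- Let H ⊆ Aut(𝔸²) be a subgroup and p ∈ k̄² a point such that the Zariski closure Δ̄ of the orbit O_H(p) is infinite and is not all of k̄² (i.e. Δ̄ is a curve). Then: (i) for any two irreducible components C and C' of Δ̄ there exists h ∈ H with h(C) = C'; (ii) for every irreducible component C of Δ̄ the stabilizer Aut(𝔸², C) is an infinite group. -/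
open MvPolynomial

noncomputable section
namespace Stmt4Aux
variable {k : Type*} [Field k]

lemma aeval_actp (φ : PlaneAut k) (q : Pt k) (P : MvPolynomial (Fin 2) k) :
    aeval (actp φ q) P = aeval q (φ.symm P) := by
  have : (aeval (actp φ q) : MvPolynomial (Fin 2) k →ₐ[k] AlgebraicClosure k)
      = (aeval q).comp φ.symm.toAlgHom := by
    apply MvPolynomial.algHom_ext
    intro i
    simp [actp]
  exact congrFun (congrArg _ this) P

lemma actp_one (q : Pt k) : actp (1 : PlaneAut k) q = q := by
  funext i; simp [actp, AlgEquiv.aut_one]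

lemma actp_mul (φ ψ : PlaneAut k) (q : Pt k) : actp (φ * ψ) q = actp φ (actp ψ q) := by
  funext i
  simp only [actp]
  rw [aeval_actp]
  rw [AlgEquiv.aut_mul]
  rfl

lemma actp_inv_actp (φ : PlaneAut k) (q : Pt k) : actp φ⁻¹ (actp φ q) = q := by
  rw [← actp_mul, inv_mul_cancel, actp_one]

lemma actp_actp_inv (φ : PlaneAut k) (q : Pt k) : actp φ (actp φ⁻¹ q) = q := by
  rw [← actp_mul, mul_inv_cancel, actp_one]

lemma actp_bijective (φ : PlaneAut k) : Function.Bijective (actp φ) :=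
  Function.bijective_iff_has_inverse.2 ⟨actp φ⁻¹, actp_inv_actp φ, actp_actp_inv φ⟩

lemma actp_image_eq_preimage (φ : PlaneAut k) (S : Set (Pt k)) :
    actp φ '' S = actp φ⁻¹ ⁻¹' S :=
  congrFun (Set.image_eq_preimage_of_inverse (actp_inv_actp φ) (actp_actp_inv φ)) S

/-- The `k̄`-algebra endomorphism of `k̄[x,y]` extending `φ.symm`. -/
def liftHom (φ : PlaneAut k) :
    MvPolynomial (Fin 2) (AlgebraicClosure k) →ₐ[AlgebraicClosure k]
      MvPolynomial (Fin 2) (AlgebraicClosure k) :=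
  aeval (fun i => MvPolynomial.map (emb k) (φ.symm (X i)))

lemma eval_actp (φ : PlaneAut k) (q : Pt k)
    (P : MvPolynomial (Fin 2) (AlgebraicClosure k)) :
    eval (actp φ q) P = eval q (liftHom φ P) := by
  have h1 : ∀ (r : Pt k) (Q : MvPolynomial (Fin 2) (AlgebraicClosure k)),
      eval r Q = aeval r Q := fun r Q => by
    rw [MvPolynomial.aeval_def, MvPolynomial.eval, MvPolynomial.eval₂Hom_congr
      (Algebra.algebraMap_self).symm rfl rfl]
    rfl
  have : (aeval (actp φ q) : MvPolynomial (Fin 2) (AlgebraicClosure k)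
        →ₐ[AlgebraicClosure k] AlgebraicClosure k)
      = (aeval q).comp (liftHom φ) := by
    apply MvPolynomial.algHom_ext
    intro i
    simp [liftHom, actp, MvPolynomial.aeval_map_algebraMap]
    rfl
  rw [h1, h1, this]; rfl


lemma isZClosed_empty : IsZClosed (∅ : Set (Pt k)) :=
  ⟨⊤, by rw [zeroLocus_top]; rfl⟩

lemma isZClosed_union {S T : Set (Pt k)} (hS : IsZClosed S) (hT : IsZClosed T) :
    IsZClosed (S ∪ T) := by
  obtain ⟨I, rfl⟩ := hS; obtain ⟨J, rfl⟩ := hT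
  refine ⟨I ⊓ J, Set.eq_of_subset_of_subset ?_ ?_⟩
  · rintro q (hq | hq) P hP
    · exact hq P hP.1
    · exact hq P hP.2
  · intro q hq
    by_cases hqI : q ∈ zeroLocus (AlgebraicClosure k) I
    · exact Or.inl hqI
    · right
      obtain ⟨f, hfI, hfq⟩ : ∃ f ∈ I, eval q f ≠ 0 := by
        by_contra h; push_neg at h; exact hqI fun p hp => h p hp
      intro g hg
      have : f * g ∈ I ⊓ J := ⟨I.mul_mem_right g hfI, J.mul_mem_left f hg⟩
      have := hq _ this
      rw [map_mul] at this
      exact (mul_eq_zero.1 this).resolve_left hfq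

lemma isZClosed_inter {S T : Set (Pt k)} (hS : IsZClosed S) (hT : IsZClosed T) :
    IsZClosed (S ∩ T) := by
  obtain ⟨I, rfl⟩ := hS; obtain ⟨J, rfl⟩ := hT
  refine ⟨I ⊔ J, Set.eq_of_subset_of_subset ?_ ?_⟩
  · rintro q ⟨hqI, hqJ⟩ P hP
    obtain ⟨a, ha, b, hb, rfl⟩ := Submodule.mem_sup.1 hP
    rw [map_add, hqI a ha, hqJ b hb, add_zero]
  · intro q hq
    exact ⟨fun p hp => hq p (Ideal.mem_sup_left hp), fun p hp => hq p (Ideal.mem_sup_right hp)⟩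

lemma isZClosed_zclos (Δ : Set (Pt k)) : IsZClosed (zclos Δ) := ⟨_, rfl⟩

lemma subset_zclos (Δ : Set (Pt k)) : Δ ⊆ zclos Δ :=
  zeroLocus_vanishingIdeal_le Δ

lemma zclos_min {Δ S : Set (Pt k)} (h : Δ ⊆ S) (hS : IsZClosed S) : zclos Δ ⊆ S := by
  obtain ⟨I, rfl⟩ := hS
  exact zeroLocus_anti_mono (le_vanishingIdeal_zeroLocus I |>.trans
    (vanishingIdeal_anti_mono h)) |>.trans le_rfl

lemma zclos_eq_self {S : Set (Pt k)} (hS : IsZClosed S) : zclos S = S :=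
  Set.eq_of_subset_of_subset (zclos_min le_rfl hS) (subset_zclos S)

lemma zclos_mono {S T : Set (Pt k)} (h : S ⊆ T) : zclos S ⊆ zclos T :=
  zclos_min (h.trans (subset_zclos T)) (isZClosed_zclos T)

lemma isZClosed_preimage (φ : PlaneAut k) {S : Set (Pt k)} (hS : IsZClosed S) :
    IsZClosed (actp φ ⁻¹' S) := by
  obtain ⟨I, rfl⟩ := hS
  refine ⟨Ideal.map (liftHom φ).toRingHom I, ?_⟩
  ext q
  constructor
  · intro hq
    have : I ≤ Ideal.comap (liftHom φ).toRingHom (RingHom.ker (eval q)) := by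
      intro P hP
      have : eval (actp φ q) P = 0 := hq P hP
      rw [eval_actp] at this
      exact this
    rw [← Ideal.map_le_iff_le_comap] at this
    exact fun P hP => this hP
  · intro hq P hP
    show eval (actp φ q) P = 0
    rw [eval_actp]
    exact hq _ (Ideal.mem_map_of_mem _ hP)

lemma isZClosed_image (φ : PlaneAut k) {S : Set (Pt k)} (hS : IsZClosed S) :
    IsZClosed (actp φ '' S) := by
  rw [actp_image_eq_preimage]
  exact isZClosed_preimage _ hS

lemma zclos_image (φ : PlaneAut k) (S : Set (Pt k)) :
    actp φ '' zclos S = zclos (actp φ '' S) := by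
  apply Set.eq_of_subset_of_subset
  · rw [Set.image_subset_iff]
    apply zclos_min
    · exact (Set.subset_preimage_image _ _).trans (Set.preimage_mono (subset_zclos _))
    · exact isZClosed_preimage _ (isZClosed_zclos _)
  · apply zclos_min
    · exact Set.image_mono (subset_zclos S)
    · exact isZClosed_image _ (isZClosed_zclos S)

lemma isZClosed_singleton (q : Pt k) : IsZClosed ({q} : Set (Pt k)) := by
  refine ⟨Ideal.span {X 0 - C (q 0), X 1 - C (q 1)}, ?_⟩
  ext r
  constructor
  · rintro rfl
    rw [zeroLocus_span]
    rintro P (rfl | rfl) <;> simp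
  · intro hr
    have h0 : eval r (X 0 - C (q 0)) = 0 :=
      hr _ (Ideal.subset_span (by simp))
    have h1 : eval r (X 1 - C (q 1)) = 0 :=
      hr _ (Ideal.subset_span (by simp))
    simp only [map_sub, eval_X, eval_C, sub_eq_zero] at h0 h1
    have : r = q := by
      funext i
      fin_cases i <;> assumption
    exact this

lemma isZClosed_finite {S : Set (Pt k)} (hS : S.Finite) : IsZClosed S := by
  refine Set.Finite.induction_on S hS isZClosed_empty ?_
  intro a s _ _ ih
  rw [Set.insert_eq]
  exact isZClosed_union (isZClosed_singleton _) ih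

lemma zclos_union (S T : Set (Pt k)) : zclos (S ∪ T) = zclos S ∪ zclos T := by
  apply Set.eq_of_subset_of_subset
  · apply zclos_min
    · exact Set.union_subset_union (subset_zclos S) (subset_zclos T)
    · exact isZClosed_union (isZClosed_zclos S) (isZClosed_zclos T)
  · exact Set.union_subset (zclos_mono Set.subset_union_left)
      (zclos_mono Set.subset_union_right)

lemma list_biUnion_cons (Z : Set (Pt k)) (L : List (Set (Pt k))) :
    (⋃ W ∈ (Z :: L), W) = Z ∪ ⋃ W ∈ L, W := by
  ext x
  simp [List.mem_cons, or_and_right, Set.mem_iUnion]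

lemma isZClosed_list_union (L : List (Set (Pt k))) (h : ∀ Z ∈ L, IsZClosed Z) :
    IsZClosed (⋃ Z ∈ L, Z) := by
  induction L with
  | nil => simpa using isZClosed_empty
  | cons Z L ih =>
    rw [list_biUnion_cons]
    exact isZClosed_union (h Z (by simp)) (ih fun W hW => h W (by simp [hW]))

/-- An irreducible set contained in a finite union of closed sets lies in one of them. -/
lemma irred_subset_of_subset_finite_union {C : Set (Pt k)} (hC : IsZIrreducible C) :
    ∀ (L : List (Set (Pt k))), (∀ Z ∈ L, IsZClosed Z) → C ⊆ ⋃ Z ∈ L, Z →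
      ∃ Z ∈ L, C ⊆ Z := by
  intro L
  induction L with
  | nil =>
    intro _ hsub
    obtain ⟨x, hx⟩ := hC.1
    simpa using hsub hx
  | cons Z L ih =>
    intro hcl hsub
    rw [list_biUnion_cons] at hsub
    rcases hC.2 _ _ (hcl Z (by simp))
        (isZClosed_list_union L fun W hW => hcl W (by simp [hW])) hsub with h | h
    · exact ⟨Z, by simp, h⟩
    · obtain ⟨W, hW, hCW⟩ := ih (fun W hW => hcl W (by simp [hW])) h
      exact ⟨W, by simp [hW], hCW⟩

lemma zclos_empty : zclos (∅ : Set (Pt k)) = ∅ := zclos_eq_self isZClosed_empty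

lemma vanishing_strict_anti {A B : Set (Pt k)} (hA : IsZClosed A) (hB : IsZClosed B)
    (hAB : A ⊆ B) (hne : A ≠ B) :
    vanishingIdeal (k := AlgebraicClosure k) B < vanishingIdeal (k := AlgebraicClosure k) A := by
  refine lt_of_le_of_ne (vanishingIdeal_anti_mono hAB) ?_
  intro h
  apply hne
  have hA' : zclos A = A := zclos_eq_self hA
  have hB' : zclos B = B := zclos_eq_self hB
  rw [← hA', ← hB']
  unfold zclos
  rw [h]

/-- Every Zariski closed set is a finite union of closed irreducible sets. -/
lemma exists_decomposition :
    ∀ S : Set (Pt k), IsZClosed S → ∃ L : List (Set (Pt k)),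
      (∀ C ∈ L, IsZClosed C ∧ IsZIrreducible C) ∧ S = ⋃ C ∈ L, C := by
  have wf : WellFounded ((· > ·) : Ideal (MvPolynomial (Fin 2) (AlgebraicClosure k)) →
      Ideal (MvPolynomial (Fin 2) (AlgebraicClosure k)) → Prop) :=
    (isNoetherian_iff (R := MvPolynomial (Fin 2) (AlgebraicClosure k))).1 inferInstance
  intro S hS
  have key : ∀ I : Ideal (MvPolynomial (Fin 2) (AlgebraicClosure k)),
      ∀ S : Set (Pt k), IsZClosed S → vanishingIdeal (k := AlgebraicClosure k) S = I →
      ∃ L : List (Set (Pt k)),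
        (∀ C ∈ L, IsZClosed C ∧ IsZIrreducible C) ∧ S = ⋃ C ∈ L, C := by
    intro I
    induction I using WellFounded.induction wf with
    | _ I ih =>
      intro S hS hI
      rcases Set.eq_empty_or_nonempty S with rfl | hne
      · exact ⟨[], by simp, by simp⟩
      by_cases hirr : IsZIrreducible S
      · exact ⟨[S], by simp [hS, hirr], by simp⟩
      · have : ∃ Z₁ Z₂ : Set (Pt k), IsZClosed Z₁ ∧ IsZClosed Z₂ ∧ S ⊆ Z₁ ∪ Z₂ ∧
            ¬S ⊆ Z₁ ∧ ¬S ⊆ Z₂ := by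
          unfold IsZIrreducible at hirr
          push_neg at hirr
          obtain ⟨Z₁, Z₂, h₁, h₂, h₃, h₄, h₅⟩ := hirr hne
          exact ⟨Z₁, Z₂, h₁, h₂, h₃, h₄, h₅⟩
        obtain ⟨Z₁, Z₂, hZ₁, hZ₂, hcov, hn₁, hn₂⟩ := this
        have hS₁ : IsZClosed (S ∩ Z₁) := isZClosed_inter hS hZ₁
        have hS₂ : IsZClosed (S ∩ Z₂) := isZClosed_inter hS hZ₂
        have hunion : S = (S ∩ Z₁) ∪ (S ∩ Z₂) := by
          rw [← Set.inter_union_distrib_left]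
          exact (Set.inter_eq_left.2 hcov).symm
        have hne₁ : S ∩ Z₁ ≠ S := fun h => hn₁ (by rw [← h]; exact Set.inter_subset_right)
        have hne₂ : S ∩ Z₂ ≠ S := fun h => hn₂ (by rw [← h]; exact Set.inter_subset_right)
        have hlt₁ := vanishing_strict_anti hS₁ hS Set.inter_subset_left hne₁
        have hlt₂ := vanishing_strict_anti hS₂ hS Set.inter_subset_left hne₂
        rw [hI] at hlt₁ hlt₂
        obtain ⟨L₁, hL₁, hU₁⟩ := ih _ hlt₁ (S ∩ Z₁) hS₁ rfl
        obtain ⟨L₂, hL₂, hU₂⟩ := ih _ hlt₂ (S ∩ Z₂) hS₂ rfl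
        refine ⟨L₁ ++ L₂, ?_, ?_⟩
        · intro C hC
          rcases List.mem_append.1 hC with h | h
          · exact hL₁ C h
          · exact hL₂ C h
        · have happ : (⋃ C ∈ L₁ ++ L₂, C) = (⋃ C ∈ L₁, C) ∪ ⋃ C ∈ L₂, C := by
            ext x
            simp only [Set.mem_iUnion, Set.mem_union, List.mem_append, or_and_right,
              exists_prop, exists_or]
          rw [hunion, hU₁, hU₂, happ]
  exact key _ S hS rfl

lemma irred_subset_component {Δ : Set (Pt k)} (hΔ : IsZClosed Δ) {T : Set (Pt k)}
    (hT : IsZIrreducible T) (hTΔ : T ⊆ Δ) :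
    ∃ C : Set (Pt k), IsIrredComponentOf C Δ ∧ T ⊆ C ∧ IsZClosed C := by
  obtain ⟨L, hL, hU⟩ := exists_decomposition Δ hΔ
  obtain ⟨D₀, hD₀L, hTD₀⟩ := irred_subset_of_subset_finite_union hT L
    (fun Z hZ => (hL Z hZ).1) (hU ▸ hTΔ)
  set s : Set (Set (Pt k)) := {D | D ∈ L ∧ D₀ ⊆ D} with hs
  have hsfin : s.Finite := (L.finite_toSet).subset (fun D hD => hD.1)
  have hsne : s.Nonempty := ⟨D₀, hD₀L, le_rfl⟩
  obtain ⟨M, hMs, hMmax⟩ := Set.Finite.exists_maximalFor id s hsfin hsne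
  have hMirr := (hL M hMs.1).2
  have hMΔ : M ⊆ Δ := hU ▸ (Set.subset_biUnion_of_mem (u := fun C => C) hMs.1)
  refine ⟨M, ⟨hMirr, hMΔ, ?_⟩, hTD₀.trans hMs.2, (hL M hMs.1).1⟩
  intro T' hT' hT'Δ hMT'
  obtain ⟨D, hDL, hT'D⟩ := irred_subset_of_subset_finite_union hT' L
    (fun Z hZ => (hL Z hZ).1) (hU ▸ hT'Δ)
  have hDs : D ∈ s := ⟨hDL, hMs.2.trans (hMT'.trans hT'D)⟩
  have : M = D := le_antisymm (hMT'.trans hT'D) (hMmax hDs (hMT'.trans hT'D))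
  exact le_antisymm hMT' (hT'D.trans this.ge)

lemma component_closed {Δ C : Set (Pt k)} (hΔ : IsZClosed Δ)
    (hC : IsIrredComponentOf C Δ) : IsZClosed C := by
  obtain ⟨M, hM, hCM, hMcl⟩ := irred_subset_component hΔ hC.1 hC.2.1
  have := hC.2.2 M hM.1 hM.2.1 hCM
  rw [this]; exact hMcl

lemma components_finite {Δ : Set (Pt k)} (hΔ : IsZClosed Δ) :
    {C : Set (Pt k) | IsIrredComponentOf C Δ}.Finite := by
  obtain ⟨L, hL, hU⟩ := exists_decomposition Δ hΔ
  apply (L.finite_toSet).subset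
  intro C hC
  obtain ⟨D, hDL, hCD⟩ := irred_subset_of_subset_finite_union hC.1 L
    (fun Z hZ => (hL Z hZ).1) (hU ▸ hC.2.1)
  have hDΔ : D ⊆ Δ := hU ▸ (Set.subset_biUnion_of_mem (u := fun C => C) hDL)
  have : C = D := hC.2.2 D (hL D hDL).2 hDΔ hCD
  rw [this]; exact hDL

lemma components_cover {Δ : Set (Pt k)} (hΔ : IsZClosed Δ) :
    Δ = ⋃ C ∈ {C : Set (Pt k) | IsIrredComponentOf C Δ}, C := by
  apply Set.eq_of_subset_of_subset
  · obtain ⟨L, hL, hU⟩ := exists_decomposition Δ hΔ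
    intro x hx
    rw [hU] at hx
    simp only [Set.mem_iUnion, exists_prop] at hx
    obtain ⟨D, hDL, hxD⟩ := hx
    have hDΔ : D ⊆ Δ := hU ▸ (Set.subset_biUnion_of_mem (u := fun C => C) hDL)
    obtain ⟨M, hM, hDM, _⟩ := irred_subset_component hΔ (hL D hDL).2 hDΔ
    exact Set.mem_biUnion hM (hDM hxD)
  · intro x hx
    simp only [Set.mem_iUnion, exists_prop] at hx
    obtain ⟨C, hC, hxC⟩ := hx
    exact hC.2.1 hxC

lemma zclos_list_biUnion (L : List (Set (Pt k))) :
    zclos (⋃ S ∈ L, S) = ⋃ S ∈ L, zclos S := by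
  induction L with
  | nil => simp [zclos_empty]
  | cons Z L ih =>
    rw [list_biUnion_cons, zclos_union, ih]
    ext x
    simp [List.mem_cons, or_and_right, Set.mem_iUnion]

lemma actp_image_image (φ ψ : PlaneAut k) (S : Set (Pt k)) :
    actp φ '' (actp ψ '' S) = actp (φ * ψ) '' S := by
  rw [Set.image_image]
  apply Set.image_congr
  intro x _
  rw [actp_mul]

lemma actp_one_image (S : Set (Pt k)) : actp (1 : PlaneAut k) '' S = S := by
  rw [show actp (1 : PlaneAut k) = id from funext actp_one, Set.image_id]

lemma image_irred (φ : PlaneAut k) {C : Set (Pt k)} (hC : IsZIrreducible C) :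
    IsZIrreducible (actp φ '' C) := by
  refine ⟨hC.1.image _, ?_⟩
  intro Z₁ Z₂ hZ₁ hZ₂ hcov
  have h' : C ⊆ actp φ ⁻¹' Z₁ ∪ actp φ ⁻¹' Z₂ := by
    intro x hx
    rcases hcov ⟨x, hx, rfl⟩ with h | h
    · exact Or.inl h
    · exact Or.inr h
  rcases hC.2 _ _ (isZClosed_preimage φ hZ₁) (isZClosed_preimage φ hZ₂) h' with h | h
  · exact Or.inl (by rw [Set.image_subset_iff]; exact h)
  · exact Or.inr (by rw [Set.image_subset_iff]; exact h)

lemma image_component (φ : PlaneAut k) {Δ C : Set (Pt k)} (hΔinv : actp φ '' Δ = Δ)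
    (hC : IsIrredComponentOf C Δ) : IsIrredComponentOf (actp φ '' C) Δ := by
  have hΔinv' : actp φ⁻¹ '' Δ = Δ := by
    conv_lhs => rw [← hΔinv]
    rw [actp_image_image, inv_mul_cancel]
    simp [actp_one]
  refine ⟨image_irred φ hC.1, ?_, ?_⟩
  · rw [← hΔinv]; exact Set.image_mono hC.2.1
  · intro T hT hTΔ hsub
    have h1 : C ⊆ actp φ⁻¹ '' T := by
      have := Set.image_mono (f := actp φ⁻¹) hsub
      rwa [actp_image_image, inv_mul_cancel, actp_one_image] at this
    have h2 : actp φ⁻¹ '' T ⊆ Δ := by rw [← hΔinv']; exact Set.image_mono hTΔ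
    have h3 : C = actp φ⁻¹ '' T := hC.2.2 _ (image_irred _ hT) h2 h1
    rw [h3, actp_image_image, mul_inv_cancel, actp_one_image]

lemma list_map_biUnion (L : List (Set (Pt k))) (f : Set (Pt k) → Set (Pt k))
    (g : Set (Pt k) → Set (Pt k)) :
    (⋃ S ∈ L.map f, g S) = ⋃ D ∈ L, g (f D) := by
  ext x
  simp only [Set.mem_iUnion, List.mem_map, exists_prop]
  constructor
  · rintro ⟨S, ⟨D, hD, rfl⟩, hx⟩; exact ⟨D, hD, hx⟩
  · rintro ⟨D, hD, hx⟩; exact ⟨f D, ⟨D, hD, rfl⟩, hx⟩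

lemma component_eq_zclos_inter {Ω C : Set (Pt k)}
    (hC : IsIrredComponentOf C (zclos Ω)) : C = zclos (Ω ∩ C) := by
  have hΔ : IsZClosed (zclos Ω) := isZClosed_zclos Ω
  have hfin := components_finite hΔ
  set Lc := hfin.toFinset.toList with hLc
  have hmem : ∀ D, D ∈ Lc ↔ IsIrredComponentOf D (zclos Ω) := by
    intro D
    rw [hLc, Finset.mem_toList, Set.Finite.mem_toFinset]
    rfl
  have hcover : zclos Ω = ⋃ D ∈ Lc, D := by
    rw [components_cover hΔ]
    ext x
    simp only [Set.mem_iUnion, exists_prop, Set.mem_setOf_eq]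
    constructor
    · rintro ⟨D, hD, hx⟩; exact ⟨D, (hmem D).2 hD, hx⟩
    · rintro ⟨D, hD, hx⟩; exact ⟨D, (hmem D).1 hD, hx⟩
  have hΩeq : Ω = ⋃ D ∈ Lc, (Ω ∩ D) := by
    ext x
    simp only [Set.mem_iUnion, exists_prop, Set.mem_inter_iff]
    constructor
    · intro hx
      have := hcover ▸ subset_zclos Ω hx
      simp only [Set.mem_iUnion, exists_prop] at this
      obtain ⟨D, hD, hxD⟩ := this
      exact ⟨D, hD, hx, hxD⟩
    · rintro ⟨D, _, hx, _⟩; exact hx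
  have hΔeq : zclos Ω = ⋃ D ∈ Lc, zclos (Ω ∩ D) := by
    conv_lhs => rw [hΩeq]
    rw [← list_map_biUnion Lc (fun D => Ω ∩ D) (fun S => S), zclos_list_biUnion,
      list_map_biUnion Lc (fun D => Ω ∩ D) zclos]
  obtain ⟨Z, hZ, hCZ⟩ := irred_subset_of_subset_finite_union hC.1
    (Lc.map (fun D => zclos (Ω ∩ D)))
    (by rintro Z hZ
        obtain ⟨D, _, rfl⟩ := List.mem_map.1 hZ
        exact isZClosed_zclos _)
    (by rw [list_map_biUnion Lc (fun D => zclos (Ω ∩ D)) (fun S => S), ← hΔeq]; exact hC.2.1)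
  obtain ⟨D, hDLc, rfl⟩ := List.mem_map.1 hZ
  have hDcomp := (hmem D).1 hDLc
  have hCD : C ⊆ D := hCZ.trans (zclos_min Set.inter_subset_right (component_closed hΔ hDcomp))
  have hCeqD : C = D := hC.2.2 D hDcomp.1 hDcomp.2.1 hCD
  subst hCeqD
  exact le_antisymm hCZ (zclos_min Set.inter_subset_right (component_closed hΔ hC))

lemma component_inter_nonempty {Ω C : Set (Pt k)}
    (hC : IsIrredComponentOf C (zclos Ω)) : (Ω ∩ C).Nonempty := by
  rcases Set.eq_empty_or_nonempty (Ω ∩ C) with h | h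
  · exfalso
    have := component_eq_zclos_inter hC
    rw [h, zclos_empty] at this
    exact hC.1.1.ne_empty this
  · exact h

lemma exists_point_unique_component {Ω C' : Set (Pt k)}
    (hC' : IsIrredComponentOf C' (zclos Ω)) :
    ∃ q' ∈ Ω ∩ C', ∀ D : Set (Pt k), IsIrredComponentOf D (zclos Ω) → q' ∈ D → D = C' := by
  by_contra hcon
  push_neg at hcon
  have hΔ : IsZClosed (zclos Ω) := isZClosed_zclos Ω
  have hfin : {D : Set (Pt k) | IsIrredComponentOf D (zclos Ω) ∧ D ≠ C'}.Finite :=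
    (components_finite hΔ).subset (fun D hD => hD.1)
  set Lc := hfin.toFinset.toList with hLc
  have hmem : ∀ D, D ∈ Lc ↔ (IsIrredComponentOf D (zclos Ω) ∧ D ≠ C') := by
    intro D
    rw [hLc, Finset.mem_toList, Set.Finite.mem_toFinset]
    rfl
  have hsub : Ω ∩ C' ⊆ ⋃ D ∈ Lc, D := by
    intro q hq
    obtain ⟨D, hDcomp, hqD, hDne⟩ := hcon q hq
    exact Set.mem_biUnion ((hmem D).2 ⟨hDcomp, hDne⟩) hqD
  have hE : IsZClosed (⋃ D ∈ Lc, D) :=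
    isZClosed_list_union Lc (fun D hD => component_closed hΔ ((hmem D).1 hD).1)
  have hC'sub : C' ⊆ ⋃ D ∈ Lc, D := by
    conv_lhs => rw [component_eq_zclos_inter hC']
    exact zclos_min hsub hE
  obtain ⟨D, hDLc, hC'D⟩ := irred_subset_of_subset_finite_union hC'.1 Lc
    (fun D hD => component_closed hΔ ((hmem D).1 hD).1) hC'sub
  obtain ⟨hDcomp, hDne⟩ := (hmem D).1 hDLc
  exact hDne (hC'.2.2 D hDcomp.1 hDcomp.2.1 hC'D).symm


lemma orb_invariant (H : Subgroup (PlaneAut k)) (p : Pt k) {h : PlaneAut k} (hh : h ∈ H) :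
    actp h '' orbSub H p = orbSub H p := by
  ext q
  constructor
  · rintro ⟨r, ⟨g, hg, rfl⟩, rfl⟩
    exact ⟨h * g, mul_mem hh hg, actp_mul h g p⟩
  · rintro ⟨g, hg, rfl⟩
    refine ⟨actp (h⁻¹ * g) p, ⟨h⁻¹ * g, mul_mem (inv_mem hh) hg, rfl⟩, ?_⟩
    rw [← actp_mul, ← mul_assoc, mul_inv_cancel, one_mul]

lemma delta_invariant (H : Subgroup (PlaneAut k)) (p : Pt k) {h : PlaneAut k} (hh : h ∈ H) :
    actp h '' zclos (orbSub H p) = zclos (orbSub H p) := by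
  rw [zclos_image, orb_invariant H p hh]

theorem stmt_4' (k : Type*) [Field k] (H : Subgroup (PlaneAut k)) (p : Pt k)
    (h1 : (zclos (orbSub H p)).Infinite) :
    (∀ C C' : Set (Pt k), IsIrredComponentOf C (zclos (orbSub H p)) →
      IsIrredComponentOf C' (zclos (orbSub H p)) → ∃ h ∈ H, actp h '' C = C') ∧
    (∀ C : Set (Pt k), IsIrredComponentOf C (zclos (orbSub H p)) → (stabSet C).Infinite) := by
  set Ω := orbSub H p with hΩdef
  constructor
  · intro C C' hC hC'
    obtain ⟨q, hqΩ, hqC⟩ := component_inter_nonempty hC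
    obtain ⟨q', ⟨hq'Ω, hq'C'⟩, huniq⟩ := exists_point_unique_component hC'
    obtain ⟨h, hhH, rfl⟩ := hqΩ
    obtain ⟨h', hh'H, rfl⟩ := hq'Ω
    refine ⟨h' * h⁻¹, mul_mem hh'H (inv_mem hhH), ?_⟩
    have hgq : actp (h' * h⁻¹) (actp h p) = actp h' p := by
      rw [actp_mul, actp_inv_actp]
    have hcomp : IsIrredComponentOf (actp (h' * h⁻¹) '' C) (zclos Ω) :=
      image_component _ (delta_invariant H p (mul_mem hh'H (inv_mem hhH))) hC
    exact huniq _ hcomp ⟨actp h p, hqC, hgq⟩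
  · intro C hC
    have hΩinf : Ω.Infinite := by
      intro hfin
      rw [zclos_eq_self (isZClosed_finite hfin)] at h1
      exact h1 hfin
    have hHinf : (H : Set (PlaneAut k)).Infinite := by
      intro hfin
      apply hΩinf
      have : Ω = (fun h => actp h p) '' (H : Set (PlaneAut k)) := by
        ext q
        constructor
        · rintro ⟨h, hh, rfl⟩; exact ⟨h, hh, rfl⟩
        · rintro ⟨h, hh, rfl⟩; exact ⟨h, hh, rfl⟩
      rw [this]
      exact hfin.image _
    intro hstab
    apply hHinf
    have hfib : ∀ D : Set (Pt k),
        {h : PlaneAut k | h ∈ H ∧ actp h '' C = D}.Finite := by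
      intro D
      rcases Set.eq_empty_or_nonempty {h : PlaneAut k | h ∈ H ∧ actp h '' C = D} with h | h
      · rw [h]; exact Set.finite_empty
      · obtain ⟨h₀, _, hD₀⟩ := h
        apply Set.Finite.subset (hstab.image (fun s => h₀ * s))
        rintro g ⟨_, hgD⟩
        refine ⟨h₀⁻¹ * g, ?_, by show h₀ * (h₀⁻¹ * g) = g; rw [← mul_assoc, mul_inv_cancel, one_mul]⟩
        show actp (h₀⁻¹ * g) '' C = C
        rw [← actp_image_image, hgD, ← hD₀, actp_image_image, inv_mul_cancel, actp_one_image]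
    apply Set.Finite.subset
      (Set.Finite.biUnion (components_finite (isZClosed_zclos Ω))
        (fun D _ => hfib D))
    intro h hh
    have hcomp : IsIrredComponentOf (actp h '' C) (zclos Ω) :=
      image_component _ (delta_invariant H p hh) hC
    exact Set.mem_biUnion hcomp ⟨hh, rfl⟩

end Stmt4Aux
end

theorem stmt_4 (k : Type*) [Field k] [PerfectField k] (H : Subgroup (PlaneAut k)) (p : Pt k)
    (h1 : (zclos (orbSub H p)).Infinite)
    (h2 : zclos (orbSub H p) ≠ Set.univ) :
    (∀ C C' : Set (Pt k), IsIrredComponentOf C (zclos (orbSub H p)) →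
      IsIrredComponentOf C' (zclos (orbSub H p)) → ∃ h ∈ H, actp h '' C = C') ∧
    (∀ C : Set (Pt k), IsIrredComponentOf C (zclos (orbSub H p)) → (stabSet C).Infinite) :=
  Stmt4Aux.stmt_4' k H p h1
end

section
/- Assume char k = 2 and let μ ∈ k* be such that the polynomial x² + μx + 1 has no root in k. Let C = {q ∈ k̄² : q₁² + μq₁q₂ + q₂² = 1} and p = (x_p, y_p) ∈ C. Then an automorphism ψ ∈ Aut(𝔸², C) satisfies ψ(p) = p if and only if ψ is the identity, or the elements a := μx_p y_p + 1 and b := μy_p² both lie in k and ψ is the linear automorphism q ↦ (a·q₁ + (μa + b)·q₂, b·q₁ + a·q₂). -/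
open MvPolynomial

noncomputable section

variable {k : Type*} [Field k]

section helper

lemma StmtAux.aeval_actp (χ : PlaneAut k) (q : Pt k) (P : MvPolynomial (Fin 2) k) :
    aeval (actp χ q) P = aeval q (χ.symm P) := by
  have h : (aeval (actp χ q) : MvPolynomial (Fin 2) k →ₐ[k] AlgebraicClosure k)
      = (aeval q).comp χ.symm.toAlgHom := by
    apply algHom_ext; intro i; simp [actp]
  exact DFunLike.congr_fun h P

lemma StmtAux.actp_mul (φ χ : PlaneAut k) (q : Pt k) :
    actp (φ * χ) q = actp φ (actp χ q) := by
  funext i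
  show aeval q ((φ * χ).symm (X i)) = aeval (actp χ q) (φ.symm (X i))
  rw [StmtAux.aeval_actp]
  rfl

lemma StmtAux.actp_one (q : Pt k) : actp (1 : PlaneAut k) q = q := by
  funext i
  show aeval q ((1 : PlaneAut k).symm (X i)) = q i
  have h : (1 : PlaneAut k).symm = 1 := rfl
  rw [h]
  simp

/-- The polynomials over `k̄` giving the point map of `ψ`. -/
def StmtAux.fpoly (ψ : PlaneAut k) : Fin 2 → MvPolynomial (Fin 2) (AlgebraicClosure k) :=
  fun i => MvPolynomial.map (emb k) (ψ.symm (X i))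

lemma StmtAux.eval_fpoly (ψ : PlaneAut k) (q : Pt k)
    (P : MvPolynomial (Fin 2) (AlgebraicClosure k)) :
    eval q (aeval (StmtAux.fpoly ψ) P) = eval (actp ψ q) P := by
  have h : (eval q).comp ((aeval (StmtAux.fpoly ψ) :
        MvPolynomial (Fin 2) (AlgebraicClosure k) →ₐ[AlgebraicClosure k] _) : _ →+* _)
      = eval (actp ψ q) := by
    apply ringHom_ext
    · intro r; simp
    · intro i
      simp only [RingHom.coe_comp, Function.comp_apply, AlgHom.coe_toRingHom, aeval_X, eval_X]
      show eval q (MvPolynomial.map (emb k) (ψ.symm (X i))) = aeval q (ψ.symm (X i))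
      rw [eval_map, aeval_def]
  exact RingHom.congr_fun h P

lemma StmtAux.aeval_fpoly_map (χ : PlaneAut k) (Q : MvPolynomial (Fin 2) k) :
    aeval (StmtAux.fpoly χ) (MvPolynomial.map (emb k) Q)
      = MvPolynomial.map (emb k) (χ.symm Q) := by
  have h : ((aeval (StmtAux.fpoly χ) :
        MvPolynomial (Fin 2) (AlgebraicClosure k) →ₐ[AlgebraicClosure k] _) :
          _ →+* _).comp (MvPolynomial.map (emb k))
      = (MvPolynomial.map (emb k)).comp χ.symm.toAlgHom.toRingHom := by
    apply ringHom_ext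
    · intro r
      simp only [RingHom.coe_comp, Function.comp_apply, AlgHom.coe_toRingHom, map_C]
      have : χ.symm (C r) = C r := by
        rw [← MvPolynomial.algebraMap_eq, AlgEquiv.commutes]
      simp [this]
    · intro i
      simp only [RingHom.coe_comp, Function.comp_apply, AlgHom.coe_toRingHom, map_X, aeval_X]
      rfl
  exact RingHom.congr_fun h Q

lemma StmtAux.comp_fpoly (χ : PlaneAut k) (P : MvPolynomial (Fin 2) (AlgebraicClosure k)) :
    aeval (StmtAux.fpoly χ⁻¹) (aeval (StmtAux.fpoly χ) P) = P := by
  have h : ((aeval (StmtAux.fpoly χ⁻¹)).comp (aeval (StmtAux.fpoly χ)) :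
      MvPolynomial (Fin 2) (AlgebraicClosure k) →ₐ[AlgebraicClosure k] _)
      = AlgHom.id _ _ := by
    apply algHom_ext; intro i
    simp only [AlgHom.comp_apply, aeval_X, AlgHom.id_apply]
    show aeval (StmtAux.fpoly χ⁻¹) (StmtAux.fpoly χ i) = X i
    rw [show StmtAux.fpoly χ i = MvPolynomial.map (emb k) (χ.symm (X i)) from rfl,
      StmtAux.aeval_fpoly_map,
      show (χ⁻¹ : PlaneAut k) = χ.symm from rfl, AlgEquiv.symm_symm,
      AlgEquiv.apply_symm_apply, map_X]
  exact DFunLike.congr_fun h P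

lemma StmtAux.finSuccEquiv_C' {L : Type*} [Field L] (n : ℕ) (r : L) :
    (finSuccEquiv L n) (MvPolynomial.C r) = Polynomial.C (MvPolynomial.C r) := by
  simp [finSuccEquiv_apply]

lemma StmtAux.irred_linear {S : Type*} [CommRing S] [IsDomain S] (a b : S) (ha : a ≠ 0)
    (hab : IsUnit a ∨ IsUnit b) :
    Irreducible (Polynomial.C a * Polynomial.X + Polynomial.C b) := by
  constructor
  · intro hu
    have h1 := Polynomial.degree_eq_zero_of_isUnit hu
    rw [Polynomial.degree_linear ha] at h1
    exact absurd h1 (by decide)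
  · intro f g hfg
    by_contra hcon
    push_neg at hcon
    obtain ⟨hf, hg⟩ := hcon
    have hp0 : (Polynomial.C a * Polynomial.X + Polynomial.C b) ≠ 0 := by
      intro h
      have := Polynomial.degree_linear (b := b) ha
      rw [h] at this; simp at this
    have hf0 : f ≠ 0 := by rintro rfl; simp at hfg; exact hp0 hfg
    have hg0 : g ≠ 0 := by rintro rfl; simp at hfg; exact hp0 hfg
    have hdeg : f.natDegree + g.natDegree = 1 := by
      rw [← Polynomial.natDegree_mul hf0 hg0, ← hfg, Polynomial.natDegree_linear ha]
    have key : ∀ f' g' : Polynomial S, f'.natDegree = 0 →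
        Polynomial.C a * Polynomial.X + Polynomial.C b = f' * g' → IsUnit f' := by
      intro f' g' h0 heq
      obtain ⟨s, rfl⟩ : ∃ s, f' = Polynomial.C s :=
        ⟨f'.coeff 0, Polynomial.eq_C_of_natDegree_eq_zero h0⟩
      rw [Polynomial.isUnit_C]
      have hdvd : Polynomial.C s ∣ Polynomial.C a * Polynomial.X + Polynomial.C b :=
        heq ▸ dvd_mul_right _ _
      rw [Polynomial.C_dvd_iff_dvd_coeff] at hdvd
      have hb := hdvd 0
      have haa := hdvd 1
      simp [Polynomial.coeff_C] at hb haa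
      rcases hab with h | h
      · exact isUnit_of_dvd_unit haa h
      · exact isUnit_of_dvd_unit hb h
    rcases Nat.eq_zero_or_pos f.natDegree with h0 | hpos
    · exact hf (key f g h0 hfg)
    · have h0 : g.natDegree = 0 := by omega
      exact hg (key g f h0 (by rw [hfg, mul_comm]))

lemma StmtAux.irred_quad {L : Type*} [Field L] (c e : L) (hc : c ≠ 0) (he : e ≠ 0) :
    Irreducible (MvPolynomial.C c * (X 0 * X 1) + MvPolynomial.C e :
      MvPolynomial (Fin 2) L) := by
  have h10 : (X (1 : Fin 2) : MvPolynomial (Fin 2) L) = X ((0 : Fin 1).succ) := rfl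
  have himg : (finSuccEquiv L 1) (MvPolynomial.C c * (X 0 * X 1) + MvPolynomial.C e)
      = Polynomial.C (MvPolynomial.C c * X 0) * Polynomial.X
        + Polynomial.C (MvPolynomial.C e) := by
    rw [map_add, map_mul, map_mul, h10, finSuccEquiv_X_zero, finSuccEquiv_X_succ,
      StmtAux.finSuccEquiv_C', StmtAux.finSuccEquiv_C', Polynomial.C_mul]
    ring
  have hirr : Irreducible ((finSuccEquiv L 1)
      (MvPolynomial.C c * (X 0 * X 1) + MvPolynomial.C e)) := by
    rw [himg]
    refine StmtAux.irred_linear _ _ ?_ (Or.inr ?_)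
    · exact mul_ne_zero (by simpa using hc) (MvPolynomial.X_ne_zero 0)
    · exact (isUnit_iff_ne_zero.mpr he).map MvPolynomial.C
  exact (MulEquiv.irreducible_iff (finSuccEquiv L 1)).mp hirr

lemma StmtAux.irred_X0 {L : Type*} [Field L] : Irreducible (X 0 : MvPolynomial (Fin 2) L) := by
  have h : (finSuccEquiv L 1) (X 0) = Polynomial.X := finSuccEquiv_X_zero
  exact (MulEquiv.irreducible_iff (finSuccEquiv L 1)).mp (h ▸ Polynomial.irreducible_X)

lemma StmtAux.unit_eq_C {L : Type*} [Field L] {P : MvPolynomial (Fin 2) L} (h : IsUnit P) :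
    ∃ d : L, d ≠ 0 ∧ P = MvPolynomial.C d := by
  obtain ⟨r, hr, hCr⟩ := Polynomial.isUnit_iff.mp (h.map (finSuccEquiv L 1))
  obtain ⟨s, hs, hCs⟩ := Polynomial.isUnit_iff.mp (hr.map (finSuccEquiv L 0))
  obtain ⟨d, rfl⟩ := MvPolynomial.C_surjective (Fin 0) s
  have hd : d ≠ 0 := by
    rintro rfl
    rw [map_zero] at hs
    exact hs.ne_zero rfl
  refine ⟨d, hd, ?_⟩
  have hr' : r = MvPolynomial.C d := by
    apply (finSuccEquiv L 0).injective
    rw [← hCs, StmtAux.finSuccEquiv_C']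
  apply (finSuccEquiv L 1).injective
  rw [← hCr, hr', StmtAux.finSuccEquiv_C']

lemma StmtAux.comp_lin {L : Type*} [Field L] (a b c d a' b' c' d' : L)
    (h1 : a' * a + b' * c = 1) (h2 : a' * b + b' * d = 0)
    (h3 : c' * a + d' * c = 0) (h4 : c' * b + d' * d = 1) :
    (aeval ![MvPolynomial.C a * X 0 + MvPolynomial.C b * X 1,
             MvPolynomial.C c * X 0 + MvPolynomial.C d * X 1] :
        MvPolynomial (Fin 2) L →ₐ[L] MvPolynomial (Fin 2) L).comp
      (aeval ![MvPolynomial.C a' * X 0 + MvPolynomial.C b' * X 1,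
               MvPolynomial.C c' * X 0 + MvPolynomial.C d' * X 1]) = AlgHom.id L _ := by
  apply MvPolynomial.algHom_ext
  intro i
  have e1 : (MvPolynomial.C a' : MvPolynomial (Fin 2) L) * MvPolynomial.C a
      + MvPolynomial.C b' * MvPolynomial.C c = 1 := by
    rw [← C_mul, ← C_mul, ← C_add, h1, C_1]
  have e2 : (MvPolynomial.C a' : MvPolynomial (Fin 2) L) * MvPolynomial.C b
      + MvPolynomial.C b' * MvPolynomial.C d = 0 := by
    rw [← C_mul, ← C_mul, ← C_add, h2, C_0]
  have e3 : (MvPolynomial.C c' : MvPolynomial (Fin 2) L) * MvPolynomial.C a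
      + MvPolynomial.C d' * MvPolynomial.C c = 0 := by
    rw [← C_mul, ← C_mul, ← C_add, h3, C_0]
  have e4 : (MvPolynomial.C c' : MvPolynomial (Fin 2) L) * MvPolynomial.C b
      + MvPolynomial.C d' * MvPolynomial.C d = 1 := by
    rw [← C_mul, ← C_mul, ← C_add, h4, C_1]
  fin_cases i <;>
    simp only [AlgHom.comp_apply, aeval_X, Matrix.cons_val_zero, Matrix.cons_val_one,
      Matrix.head_cons, map_add, map_mul, aeval_C, algebraMap_eq, AlgHom.id_apply,
      Fin.mk_one, Fin.zero_eta]
  · linear_combination (X 0 : MvPolynomial (Fin 2) L) * e1 + (X 1 : MvPolynomial (Fin 2) L) * e2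
  · linear_combination (X 0 : MvPolynomial (Fin 2) L) * e3 + (X 1 : MvPolynomial (Fin 2) L) * e4

/-- The linear change of coordinates `X₀ ↦ X₀ + α X₁`, `X₁ ↦ X₀ + β X₁`. -/
def StmtAux.linE {L : Type*} [Field L] (α β : L) (h : β - α ≠ 0) :
    MvPolynomial (Fin 2) L ≃ₐ[L] MvPolynomial (Fin 2) L :=
  AlgEquiv.ofAlgHom
    (aeval ![MvPolynomial.C 1 * X 0 + MvPolynomial.C α * X 1,
             MvPolynomial.C 1 * X 0 + MvPolynomial.C β * X 1])
    (aeval ![MvPolynomial.C ((β - α)⁻¹ * β) * X 0 + MvPolynomial.C (-((β - α)⁻¹ * α)) * X 1,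
             MvPolynomial.C (-(β - α)⁻¹) * X 0 + MvPolynomial.C ((β - α)⁻¹) * X 1])
    (StmtAux.comp_lin _ _ _ _ _ _ _ _
      (by linear_combination inv_mul_cancel₀ h) (by ring) (by ring)
      (by linear_combination inv_mul_cancel₀ h))
    (StmtAux.comp_lin _ _ _ _ _ _ _ _
      (by linear_combination inv_mul_cancel₀ h) (by ring) (by ring)
      (by linear_combination inv_mul_cancel₀ h))

lemma StmtAux.linE_apply {L : Type*} [Field L] (α β : L) (h : β - α ≠ 0)
    (P : MvPolynomial (Fin 2) L) :
    StmtAux.linE α β h P =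
      aeval ![MvPolynomial.C 1 * X 0 + MvPolynomial.C α * X 1,
              MvPolynomial.C 1 * X 0 + MvPolynomial.C β * X 1] P := rfl

end helper

end

set_option maxHeartbeats 1600000 in
theorem stmt_7 (k : Type*) [Field k] [PerfectField k] (hchar : ringChar k = 2)
    (mu : k) (hmu : mu ≠ 0)
    (hroot : ¬ ∃ r : k, r ^ 2 + mu * r + 1 = 0)
    (p : Pt k) (hp : p 0 ^ 2 + emb k mu * p 0 * p 1 + p 1 ^ 2 = 1)
    (ψ : PlaneAut k)
    (hψ : ψ ∈ stabSet {q : Pt k | q 0 ^ 2 + emb k mu * q 0 * q 1 + q 1 ^ 2 = 1}) :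
    actp ψ p = p ↔ ψ = 1 ∨
      ((∃ a : k, emb k a = emb k mu * p 0 * p 1 + 1) ∧
       (∃ b : k, emb k b = emb k mu * p 1 ^ 2) ∧
       actp ψ = fun q =>
         ![(emb k mu * p 0 * p 1 + 1) * q 0 +
             (emb k mu * (emb k mu * p 0 * p 1 + 1) + emb k mu * p 1 ^ 2) * q 1,
           emb k mu * p 1 ^ 2 * q 0 + (emb k mu * p 0 * p 1 + 1) * q 1]) := by
  classical
  set m : AlgebraicClosure k := emb k mu with hm
  -- characteristic 2 facts
  haveI hck : CharP k 2 := hchar ▸ ringChar.charP k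
  haveI hcK : CharP (AlgebraicClosure k) 2 :=
    charP_of_injective_algebraMap (algebraMap k (AlgebraicClosure k)).injective 2
  have h2K : (2 : AlgebraicClosure k) = 0 := by
    have := CharP.cast_eq_zero (AlgebraicClosure k) 2
    simpa using this
  have hm0 : m ≠ 0 := fun h => hmu ((emb k).injective (by rw [map_zero, ← hm]; exact h))
  -- a root of x² + μx + 1 in the algebraic closure
  obtain ⟨α, hα⟩ : ∃ α : AlgebraicClosure k, α ^ 2 + m * α + 1 = 0 := by
    obtain ⟨α, hr⟩ := IsAlgClosed.exists_root
      (Polynomial.C 1 * Polynomial.X ^ 2 + Polynomial.C m * Polynomial.X + Polynomial.C 1)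
      (by rw [Polynomial.degree_quadratic one_ne_zero]; decide)
    refine ⟨α, ?_⟩
    have h := hr
    simp only [Polynomial.IsRoot, Polynomial.eval_add, Polynomial.eval_mul, Polynomial.eval_pow,
      Polynomial.eval_C, Polynomial.eval_X, one_mul] at h
    exact h
  obtain ⟨β, hβ⟩ : ∃ β : AlgebraicClosure k, β = α + m := ⟨α + m, rfl⟩
  have hβα : β - α ≠ 0 := by rw [hβ]; simpa using hm0
  set τ := StmtAux.linE α β hβα with hτ
  set R := MvPolynomial (Fin 2) (AlgebraicClosure k) with hR
  set u : R := X 0 + C α * X 1 with hu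
  set v : R := X 0 + C β * X 1 with hv
  set F : R := u * v - 1 with hF
  have hτX0 : τ (X 0) = u := by
    rw [hτ, StmtAux.linE_apply]
    simp [hu]
  have hFτ : F = τ (C 1 * (X 0 * X 1) + C (-1)) := by
    rw [hτ, StmtAux.linE_apply]
    simp only [map_add, map_mul, aeval_X, aeval_C, algebraMap_eq,
      Matrix.cons_val_zero, Matrix.cons_val_one, Matrix.head_cons, map_neg, map_one, C_1]
    rw [hF, hu, hv]
    ring
  have hFirr : Irreducible F := by
    rw [hFτ]
    exact (StmtAux.irred_quad 1 (-1) one_ne_zero (neg_ne_zero.mpr one_ne_zero)).map τ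
  have hF0 : F ≠ 0 := hFirr.ne_zero
  have hFprime : Prime F := UniqueFactorizationMonoid.irreducible_iff_prime.mp hFirr
  set Δ : Set (Pt k) := {q : Pt k | q 0 ^ 2 + m * q 0 * q 1 + q 1 ^ 2 = 1} with hΔ
  have hevalF : ∀ q : Pt k, eval q F = q 0 ^ 2 + m * q 0 * q 1 + q 1 ^ 2 - 1 := by
    intro q
    have h : eval q F = (q 0 + α * q 1) * (q 0 + β * q 1) - 1 := by
      rw [hF, hu, hv]; simp
    rw [h, hβ]
    linear_combination (q 1 ^ 2) * hα + (α * q 0 * q 1 - q 1 ^ 2) * h2K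
  have hmemF : ∀ q : Pt k, q ∈ Δ ↔ eval q F = 0 := by
    intro q
    rw [hevalF, hΔ, Set.mem_setOf_eq]
    constructor
    · intro h; linear_combination h
    · intro h; linear_combination h
  have hΔzero : Δ = zeroLocus (AlgebraicClosure k) (Ideal.span {F}) := by
    ext q
    rw [mem_zeroLocus_iff, hmemF]
    constructor
    · intro h P hP
      obtain ⟨g, rfl⟩ := Ideal.mem_span_singleton.mp hP
      rw [map_mul, aeval_eq_eval, h, zero_mul]
    · intro h
      exact h F (Ideal.subset_span rfl)
  have hvan : vanishingIdeal (AlgebraicClosure k) (zeroLocus (AlgebraicClosure k) (Ideal.span {F})) = Ideal.span {F} := by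
    rw [vanishingIdeal_zeroLocus_eq_radical]
    exact ((Ideal.span_singleton_prime hF0).mpr hFprime).radical
  have hψ' : actp ψ '' Δ = Δ := hψ
  have hstab : ∀ q : Pt k, q ∈ Δ → actp ψ q ∈ Δ := by
    intro q hq
    rw [← hψ']
    exact Set.mem_image_of_mem _ hq
  have hstab' : ∀ q : Pt k, q ∈ Δ → actp ψ⁻¹ q ∈ Δ := by
    intro q hq
    rw [← hψ'] at hq
    obtain ⟨r, hr, hrq⟩ := hq
    have h : actp ψ⁻¹ q = r := by
      rw [← hrq, ← StmtAux.actp_mul, inv_mul_cancel, StmtAux.actp_one]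
    rw [h]; exact hr
  have hΦ'Φ : ∀ P : R, aeval (StmtAux.fpoly ψ⁻¹) (aeval (StmtAux.fpoly ψ) P) = P :=
    StmtAux.comp_fpoly ψ
  have hΦΦ' : ∀ P : R, aeval (StmtAux.fpoly ψ) (aeval (StmtAux.fpoly ψ⁻¹) P) = P := by
    intro P
    have h := StmtAux.comp_fpoly ψ⁻¹ P
    rwa [inv_inv] at h
  have hmem : ∀ χ : PlaneAut k, (∀ q : Pt k, q ∈ Δ → actp χ q ∈ Δ) →
      aeval (StmtAux.fpoly χ) F ∈ Ideal.span {F} := by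
    intro χ hχ
    rw [← hvan, mem_vanishingIdeal_iff]
    intro x hx
    rw [aeval_eq_eval, StmtAux.eval_fpoly, ← hmemF]
    exact hχ x (by rw [hΔzero]; exact hx)
  obtain ⟨g0, hg0⟩ := Ideal.mem_span_singleton'.mp (hmem ψ hstab)
  obtain ⟨g1, hg1⟩ := Ideal.mem_span_singleton'.mp (hmem ψ⁻¹ hstab')
  have hunitg0 : IsUnit g0 := by
    have hFe : F * 1 = F * (aeval (StmtAux.fpoly ψ⁻¹) g0 * g1) := by
      rw [mul_one]
      calc F = aeval (StmtAux.fpoly ψ⁻¹) (aeval (StmtAux.fpoly ψ) F) := (hΦ'Φ F).symm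
        _ = aeval (StmtAux.fpoly ψ⁻¹) (g0 * F) := by rw [hg0]
        _ = aeval (StmtAux.fpoly ψ⁻¹) g0 * aeval (StmtAux.fpoly ψ⁻¹) F := by rw [map_mul]
        _ = aeval (StmtAux.fpoly ψ⁻¹) g0 * (g1 * F) := by rw [hg1]
        _ = F * (aeval (StmtAux.fpoly ψ⁻¹) g0 * g1) := by ring
    have h1c := mul_left_cancel₀ hF0 hFe
    have hu1 : IsUnit (aeval (StmtAux.fpoly ψ⁻¹) g0) := IsUnit.of_mul_eq_one _ h1c.symm
    have hu2 := hu1.map (aeval (R := AlgebraicClosure k) (StmtAux.fpoly ψ))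
    rwa [hΦΦ' g0] at hu2
  obtain ⟨c, hc0, hcC⟩ := StmtAux.unit_eq_C hunitg0
  have hKey : aeval (StmtAux.fpoly ψ) F = C c * F := by rw [← hg0, hcC]
  set u' : R := aeval (StmtAux.fpoly ψ) u with hu'
  set v' : R := aeval (StmtAux.fpoly ψ) v with hv'
  have hΦF : aeval (StmtAux.fpoly ψ) F = u' * v' - 1 := by
    rw [hF, map_sub, map_mul, map_one, ← hu', ← hv']
  have hprod : u' * v' = C c * (u * v) + C (1 - c) := by
    rw [C_sub, C_1]
    linear_combination (hΦF.symm.trans hKey)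
  have hnotunit : ∀ w : R, eval (fun _ => (0 : AlgebraicClosure k)) w = 0 →
      ¬ IsUnit (aeval (StmtAux.fpoly ψ) w) := by
    intro w hw hunit
    have h1 : eval (actp ψ⁻¹ (fun _ => (0 : AlgebraicClosure k))) (aeval (StmtAux.fpoly ψ) w)
        = 0 := by
      rw [StmtAux.eval_fpoly,
        show actp ψ (actp ψ⁻¹ (fun _ => (0 : AlgebraicClosure k)))
            = (fun _ => (0 : AlgebraicClosure k)) from by
          rw [← StmtAux.actp_mul, mul_inv_cancel, StmtAux.actp_one]]
      exact hw
    exact ((hunit.map (eval (actp ψ⁻¹ (fun _ => (0 : AlgebraicClosure k))))).ne_zero) h1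
  have hu0eval : eval (fun _ => (0 : AlgebraicClosure k)) u = 0 := by rw [hu]; simp
  have hv0eval : eval (fun _ => (0 : AlgebraicClosure k)) v = 0 := by rw [hv]; simp
  have hPhiU : aeval (StmtAux.fpoly ψ) u
      = StmtAux.fpoly ψ 0 + C α * StmtAux.fpoly ψ 1 := by
    rw [hu]
    simp only [map_add, map_mul, aeval_X, aeval_C, algebraMap_eq]
  have hPhiV : aeval (StmtAux.fpoly ψ) v
      = StmtAux.fpoly ψ 0 + C β * StmtAux.fpoly ψ 1 := by
    rw [hv]
    simp only [map_add, map_mul, aeval_X, aeval_C, algebraMap_eq]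
  -- evaluation at the fixed point
  set s₀ : AlgebraicClosure k := p 0 + α * p 1 with hs₀
  set t₀ : AlgebraicClosure k := p 0 + β * p 1 with ht₀
  have hst : s₀ * t₀ = 1 := by
    rw [hs₀, ht₀, hβ]
    linear_combination (p 1 ^ 2) * hα + hp + (α * p 0 * p 1 - p 1 ^ 2) * h2K
  have hs₀0 : s₀ ≠ 0 := left_ne_zero_of_mul_eq_one hst
  have ht₀0 : t₀ ≠ 0 := right_ne_zero_of_mul_eq_one hst
  constructor
  · -- forward direction
    intro hfix
    have hevalu' : eval p u' = s₀ := by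
      rw [hu', StmtAux.eval_fpoly, hfix, hu, hs₀]; simp
    have hevalv' : eval p v' = t₀ := by
      rw [hv', StmtAux.eval_fpoly, hfix, hv, ht₀]; simp
    have hevalU : eval p u = s₀ := by rw [hu, hs₀]; simp
    by_cases hc1 : c = 1
    · -- the main dichotomy
      have huv : u' * v' = u * v := by rw [hprod, hc1]; simp
      have hUirr : Irreducible u := by
        have h := (StmtAux.irred_X0 (L := AlgebraicClosure k)).map τ
        rwa [hτX0] at h
      have hUprime : Prime u := UniqueFactorizationMonoid.irreducible_iff_prime.mp hUirr
      have hVirr : Irreducible v := by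
        have hαβ2 : α - β ≠ 0 := fun h => hβα (by linear_combination -h)
        have h := (StmtAux.irred_X0 (L := AlgebraicClosure k)).map
          (StmtAux.linE β α hαβ2)
        have himg : StmtAux.linE β α hαβ2 (X 0) = v := by
          rw [StmtAux.linE_apply]; simp [hv]
        rwa [himg] at h
      have hUne : u ≠ 0 := hUirr.ne_zero
      have hdvd : u ∣ u' * v' := huv ▸ dvd_mul_right u v
      rcases hUprime.2.2 u' v' hdvd with hcase | hcase
      · -- u ∣ u' : ψ is the identity
        obtain ⟨w, hw⟩ := hcase
        have hvw : v = w * v' := by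
          have h : u * v = u * (w * v') := by rw [← huv, hw]; ring
          exact mul_left_cancel₀ hUne h
        rcases hVirr.isUnit_or_isUnit hvw with hwu | hv'u
        · obtain ⟨s, hs0, hsC⟩ := StmtAux.unit_eq_C hwu
          -- evaluate at p : s = 1
          have hs1 : s = 1 := by
            have h1 : eval p u' = s₀ * s := by
              rw [hw, hsC, map_mul, eval_C, hevalU]
            rw [hevalu'] at h1
            have h2 : s₀ * 1 = s₀ * s := by rw [mul_one, ← h1]
            exact (mul_left_cancel₀ hs₀0 h2).symm
          have hu'u : u' = u := by rw [hw, hsC, hs1, C_1, mul_one]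
          have hv'v : v' = v := by rw [hvw, hsC, hs1, C_1, one_mul]
          -- extract the coordinate polynomials
          have hE1 : StmtAux.fpoly ψ 0 + C α * StmtAux.fpoly ψ 1 = u := by
            rw [← hPhiU, ← hu', hu'u]
          have hE2 : StmtAux.fpoly ψ 0 + C β * StmtAux.fpoly ψ 1 = v := by
            rw [← hPhiV, ← hv', hv'v]
          have hCm0 : (C m : R) ≠ 0 :=
            fun h => hm0 (MvPolynomial.C_injective _ _ (by rw [h, map_zero]))
          rw [hu] at hE1
          rw [hv] at hE2
          have hCadd : (C β : R) = C α + C m := by rw [hβ, C_add]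
          have hfp1 : StmtAux.fpoly ψ 1 = X 1 := by
            have h : C m * StmtAux.fpoly ψ 1 = C m * X 1 := by
              linear_combination hE2 - hE1 - (StmtAux.fpoly ψ 1 - X 1) * hCadd
            exact mul_left_cancel₀ hCm0 h
          have hfp0 : StmtAux.fpoly ψ 0 = X 0 := by
            rw [hfp1] at hE1
            linear_combination hE1
          -- conclude ψ = 1
          left
          have hsymmX : ∀ i : Fin 2, ψ.symm (X i) = X i := by
            intro i
            apply MvPolynomial.map_injective (emb k) (emb k).injective
            rw [map_X]
            fin_cases i
            · exact hfp0
            · exact hfp1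
          have hid : (ψ.symm.toAlgHom : MvPolynomial (Fin 2) k →ₐ[k] MvPolynomial (Fin 2) k)
              = AlgHom.id k _ := by
            apply algHom_ext
            intro i
            simpa using hsymmX i
          have hψsymm : ψ.symm = 1 := by
            apply AlgEquiv.ext
            intro P
            exact DFunLike.congr_fun hid P
          have h := congrArg AlgEquiv.symm hψsymm
          rwa [AlgEquiv.symm_symm, show (1 : PlaneAut k).symm = 1 from rfl] at h
        · -- v' is a unit : contradiction
          exact absurd (hv' ▸ hv'u) (hnotunit v hv0eval)
      · -- u ∣ v' : ψ is the "swap"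
        obtain ⟨w, hw⟩ := hcase
        have hvw : v = u' * w := by
          have h : u * v = u * (u' * w) := by rw [← huv, hw]; ring
          exact mul_left_cancel₀ hUne h
        rcases hVirr.isUnit_or_isUnit hvw with hu'u | hwu
        · exact absurd (hu' ▸ hu'u) (hnotunit u hu0eval)
        obtain ⟨s, hs0, hsC⟩ := StmtAux.unit_eq_C hwu
        -- evaluate at p
        have hsv : s₀ * s = t₀ := by
          have h1 : eval p v' = eval p u * s := by
            rw [hw, hsC, map_mul, eval_C]
          rw [hevalv', hevalU] at h1
          exact h1.symm
        have hs_val : s = t₀ ^ 2 := by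
          linear_combination t₀ * hsv - s * hst
        have hCst : (C (s₀ ^ 2) : R) * C (t₀ ^ 2) = 1 := by
          rw [← C_mul, ← mul_pow, hst]; simp
        have hu'v : u' = C (s₀ ^ 2) * v := by
          have h1 : C (s₀ ^ 2) * v = C (s₀ ^ 2) * (u' * C (t₀ ^ 2)) := by
            rw [hvw, hsC, hs_val]
          rw [h1]
          linear_combination (-u') * hCst
        have hv'u : v' = C (t₀ ^ 2) * u := by
          rw [hw, hsC, hs_val, mul_comm]
        -- coordinate polynomials
        have hE1 : StmtAux.fpoly ψ 0 + C α * StmtAux.fpoly ψ 1 = C (s₀ ^ 2) * v := by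
          rw [← hPhiU, ← hu', hu'v]
        have hE2 : StmtAux.fpoly ψ 0 + C β * StmtAux.fpoly ψ 1 = C (t₀ ^ 2) * u := by
          rw [← hPhiV, ← hv', hv'u]
        set A : AlgebraicClosure k := m * p 0 * p 1 + 1 with hA
        set Bc : AlgebraicClosure k := m * (m * p 0 * p 1 + 1) + m * p 1 ^ 2 with hBc
        set bc : AlgebraicClosure k := m * p 1 ^ 2 with hbc
        -- scalar identities
        have I1 : (α - β) * bc = s₀ ^ 2 - t₀ ^ 2 := by
          rw [hbc, hs₀, ht₀, hβ]
          linear_combination (m * p 0 * p 1 + α * m * p 1 ^ 2) * h2K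
        have I2 : (α - β) * A = s₀ ^ 2 * β - t₀ ^ 2 * α := by
          rw [hA, hs₀, ht₀, hβ]
          linear_combination (m * p 1 ^ 2) * hα - m * hp - m * h2K
        have I3 : A + α * bc = s₀ ^ 2 := by
          rw [hA, hbc, hs₀]
          linear_combination (-(p 1 ^ 2)) * hα - hp +
            (p 1 ^ 2 + m * p 0 * p 1 - α * p 0 * p 1 + α * m * p 1 ^ 2) * h2K
        have I4 : Bc + α * A = s₀ ^ 2 * β := by
          rw [hA, hBc, hs₀, hβ]
          linear_combination (-2 * p 0 * p 1 - α * p 1 ^ 2) * hα + (-m - α) * hp +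
            (p 0 * p 1 + m * p 1 ^ 2 + m ^ 2 * p 0 * p 1 + α * p 1 ^ 2 + α * m * p 0 * p 1) * h2K
        -- lifted identities
        have HI1 : (C α - C β : R) * C bc = C (s₀ ^ 2) - C (t₀ ^ 2) := by
          rw [← C_sub, ← C_mul, I1, C_sub]
        have HI2 : (C α - C β : R) * C A = C (s₀ ^ 2) * C β - C (t₀ ^ 2) * C α := by
          rw [← C_sub, ← C_mul, I2, C_sub, C_mul, C_mul]
        have HI3 : (C A : R) + C α * C bc = C (s₀ ^ 2) := by
          rw [← C_mul, ← C_add, I3]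
        have HI4 : (C Bc : R) + C α * C A = C (s₀ ^ 2) * C β := by
          rw [← C_mul, ← C_add, I4, C_mul]
        have hCsub0 : (C α - C β : R) ≠ 0 := by
          intro h
          have h2 : α - β = 0 := MvPolynomial.C_injective _ _ (by rw [C_sub, h, C_0])
          exact hβα (by linear_combination -h2)
        have hfp1 : StmtAux.fpoly ψ 1 = C bc * X 0 + C A * X 1 := by
          apply mul_left_cancel₀ hCsub0
          have hdiff : (C α - C β : R) * StmtAux.fpoly ψ 1
              = C (s₀ ^ 2) * v - C (t₀ ^ 2) * u := by
            linear_combination hE1 - hE2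
          rw [hdiff, hu, hv]
          linear_combination (-(X 0 : R)) * HI1 - (X 1 : R) * HI2
        have hfp0 : StmtAux.fpoly ψ 0 = C A * X 0 + C Bc * X 1 := by
          rw [hfp1, hv] at hE1
          linear_combination hE1 - (X 0 : R) * HI3 - (X 1 : R) * HI4
        -- now conclude
        right
        have hact : ∀ (q : Pt k) (i : Fin 2),
            actp ψ q i = eval q (StmtAux.fpoly ψ i) := by
          intro q i
          show aeval q (ψ.symm (X i)) = eval q (MvPolynomial.map (emb k) (ψ.symm (X i)))
          rw [eval_map, aeval_def]
        have hcast : ∀ Q : MvPolynomial (Fin 2) k,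
            emb k (eval (fun j => if j = 0 then (1 : k) else 0) Q)
              = eval (fun j : Fin 2 => if j = 0 then (1 : AlgebraicClosure k) else 0)
                  (MvPolynomial.map (emb k) Q) := by
          intro Q
          rw [eval_map]
          have h := MvPolynomial.eval₂_comp_left (emb k) (RingHom.id k)
            (fun j : Fin 2 => if j = 0 then (1 : k) else 0) Q
          rw [RingHom.comp_id] at h
          rw [show (eval (fun j : Fin 2 => if j = 0 then (1 : k) else 0) Q)
              = eval₂ (RingHom.id k) (fun j : Fin 2 => if j = 0 then (1 : k) else 0) Q from rfl]
          rw [h]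
          congr 1
          funext j
          by_cases hj : j = 0 <;> simp [hj]
        refine ⟨⟨eval (fun j => if j = 0 then (1 : k) else 0) (ψ.symm (X 0)), ?_⟩,
          ⟨eval (fun j => if j = 0 then (1 : k) else 0) (ψ.symm (X 1)), ?_⟩, ?_⟩
        · rw [hcast,
            show MvPolynomial.map (emb k) (ψ.symm (X 0)) = StmtAux.fpoly ψ 0 from rfl, hfp0]
          simp [hA]
        · rw [hcast,
            show MvPolynomial.map (emb k) (ψ.symm (X 1)) = StmtAux.fpoly ψ 1 from rfl, hfp1]
          simp [hbc]
        · refine funext fun q => funext fun i => ?_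
          have h0 : actp ψ q 0 = A * q 0 + Bc * q 1 := by
            rw [hact, hfp0]; simp
          have h1 : actp ψ q 1 = bc * q 0 + A * q 1 := by
            rw [hact, hfp1]; simp
          fin_cases i
          · simpa using h0
          · simpa using h1
    · -- c ≠ 1 : impossible
      exfalso
      have h1c : (1 : AlgebraicClosure k) - c ≠ 0 := sub_ne_zero.mpr (Ne.symm hc1)
      have himg2 : τ (C c * (X 0 * X 1) + C (1 - c)) = C c * (u * v) + C (1 - c) := by
        rw [hτ, StmtAux.linE_apply]
        simp only [map_add, map_mul, aeval_X, aeval_C, algebraMap_eq,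
          Matrix.cons_val_zero, Matrix.cons_val_one, Matrix.head_cons, C_1]
        rw [hu, hv]
        ring
      have hirr : Irreducible (u' * v') := by
        rw [hprod, ← himg2]
        exact (StmtAux.irred_quad c (1 - c) hc0 h1c).map τ
      rcases hirr.isUnit_or_isUnit rfl with h | h
      · exact hnotunit u hu0eval (hu' ▸ h)
      · exact hnotunit v hv0eval (hv' ▸ h)
  · -- reverse direction
    rintro (rfl | ⟨_, _, hfun⟩)
    · exact StmtAux.actp_one p
    · rw [hfun]
      have h0 : (m * p 0 * p 1 + 1) * p 0 + (m * (m * p 0 * p 1 + 1) + m * p 1 ^ 2) * p 1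
          = p 0 := by
        linear_combination (m * p 1) * hp + (m * p 1) * h2K
      have h1 : m * p 1 ^ 2 * p 0 + (m * p 0 * p 1 + 1) * p 1 = p 1 := by
        linear_combination (m * p 0 * p 1 ^ 2) * h2K
      funext i
      fin_cases i
      · simpa using h0
      · simpa using h1
end
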